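/- arXiv:1809.11148 — 5 statements merged into one kernel-verified Lean document; each statement's English description precedes it below -/
import Mathlib

section
/- Let h : [0,1]^d → ℝ, let {B_i}_{i∈I} be a finite family of closed convex subsets of ℝ^d, let E ⊂ {0,1}^d, and let δ > 0. Suppose {0,1}^d \ E is contained in the union of the B_i, and for every i ∈ I and all x, y ∈ B_i we have h(y) − h(x) ≤ δ. Then for any p ∈ [0,1] and t ∈ ℝ, μ_p({x ∈ {0,1}^d : h(x) ≥ t}) ≤ |I|·exp(−φ_{h,p}(t−δ)) + μ_p(E), where φ_{h,p}(s) = inf{ I_p(x) : x ∈ [0,1]^d, h(x) ≥ s } and I_p(x) = Σ_i [x_i log(x_i/p) + (1−x_i) log((1−x_i)/(1−p))]. -/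
/-- Relative entropy of a Bernoulli(x) against Bernoulli(p) (with the convention
`0·log 0 = 0`, automatic since `Real.log 0 = 0`). -/
noncomputable def Ip (p x : ℝ) : ℝ :=
  x * Real.log (x / p) + (1 - x) * Real.log ((1 - x) / (1 - p))

/-- `I_p` of a point of `[0,1]^d`. -/
noncomputable def IpVec {d : ℕ} (p : ℝ) (x : Fin d → ℝ) : ℝ := ∑ i, Ip p (x i)

/-- Embedding of the discrete cube `{0,1}^d` into `[0,1]^d ⊂ ℝ^d`. -/
def cubeEmbed {d : ℕ} (x : Fin d → Bool) : Fin d → ℝ := fun i => if x i then 1 else 0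

/-- The product Bernoulli(p) weight of a point of the discrete cube. -/
noncomputable def cubeWeight {d : ℕ} (p : ℝ) (x : Fin d → Bool) : ℝ :=
  ∏ i, if x i then p else 1 - p


lemma cubeWeight_nonneg {d : ℕ} {p : ℝ} (hp : p ∈ Set.Icc (0:ℝ) 1) (x : Fin d → Bool) :
    0 ≤ cubeWeight p x := by
  apply Finset.prod_nonneg
  intro i _
  by_cases hb : x i <;> simp [hb] <;> [exact hp.1; linarith [hp.2]]

lemma neg_one_le_mul_log_div {a b : ℝ} (ha : a ∈ Set.Icc (0:ℝ) 1) (hb : b ∈ Set.Icc (0:ℝ) 1) :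
    -1 ≤ a * Real.log (a / b) := by
  rcases eq_or_lt_of_le ha.1 with h0 | h0
  · simp [← h0]
  rcases eq_or_lt_of_le hb.1 with hb0 | hb0
  · simp [← hb0]
  have h1 : a ≤ a / b := by
    rw [le_div_iff₀ hb0]; nlinarith [ha.1, hb.2]
  have h2 : Real.log a ≤ Real.log (a / b) := Real.log_le_log h0 h1
  have h3 : -1 ≤ a * Real.log a := by
    have h4 : Real.log a⁻¹ ≤ a⁻¹ - 1 := Real.log_le_sub_one_of_pos (by positivity)
    rw [Real.log_inv] at h4
    have h5 := mul_le_mul_of_nonneg_left h4 h0.le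
    have h6 : a * a⁻¹ = 1 := mul_inv_cancel₀ h0.ne'
    nlinarith [ha.2]
  nlinarith [mul_le_mul_of_nonneg_left h2 h0.le]

lemma Ip_lower {p x : ℝ} (hp : p ∈ Set.Icc (0:ℝ) 1) (hx : x ∈ Set.Icc (0:ℝ) 1) :
    -2 ≤ Ip p x := by
  have h1 := neg_one_le_mul_log_div hx hp
  have h2 : -1 ≤ (1-x) * Real.log ((1-x)/(1-p)) :=
    neg_one_le_mul_log_div ⟨by linarith [hx.2], by linarith [hx.1]⟩
      ⟨by linarith [hp.2], by linarith [hp.1]⟩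
  unfold Ip; linarith

lemma IpVec_lower {d : ℕ} {p : ℝ} (hp : p ∈ Set.Icc (0:ℝ) 1) {y : Fin d → ℝ}
    (hy : ∀ i, y i ∈ Set.Icc (0:ℝ) 1) : -(2*d) ≤ IpVec p y := by
  unfold IpVec
  calc -(2*(d:ℝ)) = ∑ _i : Fin d, (-2 : ℝ) := by simp; ring
    _ ≤ ∑ i, Ip p (y i) := Finset.sum_le_sum fun i _ => Ip_lower hp (hy i)


noncomputable def ybar {d : ℕ} (p : ℝ) (A : Finset (Fin d → Bool)) : Fin d → ℝ :=
  fun i => (∑ x ∈ A, if x i then cubeWeight p x else 0) / ∑ x ∈ A, cubeWeight p x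

lemma ybar_mem {d : ℕ} {p : ℝ} (hp : p ∈ Set.Icc (0:ℝ) 1) {A : Finset (Fin d → Bool)}
    (hm : 0 < ∑ x ∈ A, cubeWeight p x) (i : Fin d) : ybar p A i ∈ Set.Icc (0:ℝ) 1 := by
  constructor
  · simp only [ybar]
    apply div_nonneg _ hm.le
    apply Finset.sum_nonneg; intro x _
    by_cases hb : x i <;> simp [hb, cubeWeight_nonneg hp x]
  · simp only [ybar]
    rw [div_le_one hm]
    apply Finset.sum_le_sum; intro x _
    by_cases hb : x i <;> simp [hb, cubeWeight_nonneg hp x]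

lemma ybar_eq_sum {d : ℕ} {p : ℝ} (A : Finset (Fin d → Bool)) :
    ybar p A = ∑ x ∈ A, (cubeWeight p x / ∑ z ∈ A, cubeWeight p z) • cubeEmbed x := by
  funext i
  rw [Finset.sum_apply, ybar, Finset.sum_div]
  apply Finset.sum_congr rfl; intro x _
  by_cases hb : x i <;> simp [hb, cubeEmbed]

lemma key_bound {d : ℕ} {p : ℝ} (hp : p ∈ Set.Icc (0:ℝ) 1) (A : Finset (Fin d → Bool))
    (hm : 0 < ∑ x ∈ A, cubeWeight p x) :
    ∑ x ∈ A, cubeWeight p x ≤ Real.exp (-(IpVec p (ybar p A))) := by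
  classical
  set m : ℝ := ∑ x ∈ A, cubeWeight p x with hmdef
  set ν : (Fin d → Bool) → ℝ := fun x => cubeWeight p x / m with hνdef
  set yb : Fin d → ℝ := ybar p A with hybdef
  have hw : ∀ x : Fin d → Bool, 0 ≤ cubeWeight p x := cubeWeight_nonneg hp
  have hν0 : ∀ x, 0 ≤ ν x := fun x => div_nonneg (hw x) hm.le
  have hν1 : ∑ x ∈ A, ν x = 1 := by
    rw [hνdef]; rw [← Finset.sum_div]; field_simp; exact hmdef.symm
  have hyb : ∀ i, yb i = ∑ x ∈ A, ν x * (if x i then 1 else 0) := by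
    intro i
    rw [hybdef, ybar, Finset.sum_div]
    apply Finset.sum_congr rfl; intro x _
    by_cases hb : x i <;> simp [hb, hνdef] <;> rfl
  have h1yb : ∀ i, 1 - yb i = ∑ x ∈ A, ν x * (if x i then 0 else 1) := by
    intro i
    have e : (1:ℝ) - yb i = ∑ x ∈ A, (ν x - ν x * (if x i then 1 else 0)) := by
      rw [Finset.sum_sub_distrib, hν1, ← hyb i]
    rw [e]
    apply Finset.sum_congr rfl; intro x _
    by_cases hb : x i <;> simp [hb]
  have hyb01 : ∀ i, yb i ∈ Set.Icc (0:ℝ) 1 := fun i => ybar_mem hp hm i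
  set T : (Fin d → Bool) → ℝ := fun x =>
    ∑ i, (if x i then Real.log (yb i / p) else Real.log ((1 - yb i) / (1 - p))) with hTdef
  set q : (Fin d → Bool) → ℝ := fun x => ∏ i, (if x i then yb i else 1 - yb i) with hqdef
  have hq0 : ∀ x, 0 ≤ q x := by
    intro x; apply Finset.prod_nonneg; intro i _
    by_cases hb : x i <;> simp [hb] <;> [exact (hyb01 i).1; linarith [(hyb01 i).2]]
  -- Step 1
  have step1 : IpVec p yb = ∑ x ∈ A, ν x * T x := by
    have hIp : ∀ i : Fin d, Ip p (yb i) = ∑ x ∈ A, ν x *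
        (if x i then Real.log (yb i / p) else Real.log ((1 - yb i) / (1 - p))) := by
      intro i
      calc Ip p (yb i)
          = (∑ x ∈ A, ν x * (if x i then 1 else 0)) * Real.log (yb i / p)
            + (∑ x ∈ A, ν x * (if x i then 0 else 1)) * Real.log ((1 - yb i) / (1 - p)) := by
            rw [Ip, ← hyb i, ← h1yb i]
        _ = ∑ x ∈ A, (ν x * (if x i then 1 else 0) * Real.log (yb i / p)
            + ν x * (if x i then 0 else 1) * Real.log ((1 - yb i) / (1 - p))) := by
            rw [Finset.sum_mul, Finset.sum_mul, ← Finset.sum_add_distrib]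
        _ = ∑ x ∈ A, ν x * (if x i then Real.log (yb i / p)
              else Real.log ((1 - yb i) / (1 - p))) := by
            apply Finset.sum_congr rfl; intro x _
            by_cases hb : x i <;> simp [hb]
    rw [IpVec]
    rw [Finset.sum_congr rfl (fun i _ => hIp i), Finset.sum_comm]
    apply Finset.sum_congr rfl; intro x _
    rw [hTdef, Finset.mul_sum]
  -- Step 2 : pointwise
  have step2 : ∀ x ∈ A, ν x * (T x + Real.log m) ≤ q x - ν x := by
    intro x hxA
    rcases eq_or_lt_of_le (hw x) with hw0 | hw0
    · have : ν x = 0 := by rw [hνdef]; simp [← hw0]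
      rw [this]; simp [hq0 x]
    · have hν : 0 < ν x := div_pos hw0 hm
      have hfac : ∀ i : Fin d, 0 < (if x i then p else 1 - p) := by
        intro i
        by_contra hcon
        push_neg at hcon
        have hz : (if x i then p else 1 - p) = 0 := le_antisymm hcon (by
          by_cases hb : x i <;> simp [hb] <;> [exact hp.1; linarith [hp.2]])
        have : cubeWeight p x = 0 := Finset.prod_eq_zero (Finset.mem_univ i) hz
        exact hw0.ne' this
      have hsi : ∀ i : Fin d, 0 < (if x i then yb i else 1 - yb i) := by
        intro i
        by_cases hb : x i
        · simp only [hb, if_true]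
          calc (0:ℝ) < ν x := hν
            _ = ν x * (if x i then (1:ℝ) else 0) := by simp [hb]
            _ ≤ ∑ z ∈ A, ν z * (if z i then (1:ℝ) else 0) := by
                apply Finset.single_le_sum (f := fun z => ν z * (if z i then (1:ℝ) else 0))
                  (fun z _ => by by_cases hzb : z i <;> simp [hzb, hν0 z]) hxA
            _ = yb i := (hyb i).symm
        · simp only [hb, if_false]
          calc (0:ℝ) < ν x := hν
            _ = ν x * (if x i then (0:ℝ) else 1) := by simp [hb]
            _ ≤ ∑ z ∈ A, ν z * (if z i then (0:ℝ) else 1) := by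
                apply Finset.single_le_sum (f := fun z => ν z * (if z i then (0:ℝ) else 1))
                  (fun z _ => by by_cases hzb : z i <;> simp [hzb, hν0 z]) hxA
            _ = 1 - yb i := (h1yb i).symm
      have hq : 0 < q x := Finset.prod_pos fun i _ => hsi i
      have hT : T x = Real.log (q x / cubeWeight p x) := by
        have hTr : T x = ∑ i, (if x i then Real.log (yb i / p)
            else Real.log ((1 - yb i) / (1 - p))) := rfl
        have heq : ∀ i : Fin d, (if x i then Real.log (yb i / p)
            else Real.log ((1 - yb i) / (1 - p)))
            = Real.log ((if x i then yb i else 1 - yb i) / (if x i then p else 1 - p)) := by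
          intro i; by_cases hb : x i <;> simp [hb]
        rw [hTr, Finset.sum_congr rfl (fun i _ => heq i),
          ← Real.log_prod (fun i _ => div_ne_zero (hsi i).ne' (hfac i).ne'),
          Finset.prod_div_distrib]
        rfl
      have harg : q x / cubeWeight p x * m = q x / ν x := by
        rw [hνdef]
        field_simp
      have hTm : T x + Real.log m = Real.log (q x / ν x) := by
        rw [hT, ← Real.log_mul (div_pos hq hw0).ne' hm.ne', harg]
      rw [hTm]
      have hlog : Real.log (q x / ν x) ≤ q x / ν x - 1 :=
        Real.log_le_sub_one_of_pos (div_pos hq hν)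
      have := mul_le_mul_of_nonneg_left hlog hν.le
      have hqν : ν x * (q x / ν x) = q x := by field_simp
      nlinarith
  -- sum up
  have sumq : ∑ x ∈ A, q x ≤ 1 := by
    have h1 : ∑ x ∈ A, q x ≤ ∑ x : Fin d → Bool, q x :=
      Finset.sum_le_sum_of_subset_of_nonneg (Finset.subset_univ A) (fun x _ _ => hq0 x)
    have h2 : ∑ x : Fin d → Bool, q x = ∏ i : Fin d, ((yb i) + (1 - yb i)) := by
      rw [hqdef]
      rw [show (∏ i : Fin d, ((yb i) + (1 - yb i)))
          = ∏ i : Fin d, ∑ b : Bool, (if b then yb i else 1 - yb i) by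
        apply Finset.prod_congr rfl; intro i _; simp]
      rw [Finset.prod_univ_sum]
      rw [Fintype.piFinset_univ]
    rw [h2] at h1
    simpa using h1
  have main : IpVec p yb + Real.log m ≤ 0 := by
    have : IpVec p yb + Real.log m = ∑ x ∈ A, ν x * (T x + Real.log m) := by
      rw [step1]
      rw [show ∑ x ∈ A, ν x * (T x + Real.log m)
          = ∑ x ∈ A, (ν x * T x + ν x * Real.log m) by
        apply Finset.sum_congr rfl; intro x _; ring]
      rw [Finset.sum_add_distrib, ← Finset.sum_mul, hν1, one_mul]
    rw [this]
    calc ∑ x ∈ A, ν x * (T x + Real.log m) ≤ ∑ x ∈ A, (q x - ν x) :=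
        Finset.sum_le_sum step2
      _ = (∑ x ∈ A, q x) - 1 := by rw [Finset.sum_sub_distrib, hν1]
      _ ≤ 0 := by linarith
  calc m = Real.exp (Real.log m) := (Real.exp_log hm).symm
    _ ≤ Real.exp (-(IpVec p yb)) := Real.exp_le_exp.2 (by linarith)

open Classical in
/-- covering the cube minus an exceptional set by closed convex sets on
which `h` fluctuates by at most `δ` yields the upper-tail bound
`μ_p(h ≥ t) ≤ |I| exp(−φ_{h,p}(t−δ)) + μ_p(E)`. -/
theorem upper_tail_of_convex_covering {d : ℕ} (h : (Fin d → ℝ) → ℝ)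
    {I : Type*} [Fintype I] (B : I → Set (Fin d → ℝ))
    (hBclosed : ∀ i, IsClosed (B i)) (hBconvex : ∀ i, Convex ℝ (B i))
    (E : Finset (Fin d → Bool)) (δ : ℝ) (hδ : 0 < δ)
    (hcover : ∀ x : Fin d → Bool, x ∉ E → ∃ i, cubeEmbed x ∈ B i)
    (hfluct : ∀ i, ∀ x ∈ B i, ∀ y ∈ B i, h y - h x ≤ δ)
    (p : ℝ) (hp : p ∈ Set.Icc (0:ℝ) 1) (t : ℝ) :
    ∑ x ∈ Finset.univ.filter (fun x : Fin d → Bool => t ≤ h (cubeEmbed x)),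
        cubeWeight p x ≤
      (Fintype.card I : ℝ) *
        Real.exp (-(sInf {r : ℝ | ∃ y : Fin d → ℝ,
          (∀ i, y i ∈ Set.Icc (0:ℝ) 1) ∧ t - δ ≤ h y ∧ r = IpVec p y}))
      + ∑ x ∈ E, cubeWeight p x := by
  classical
  set S : Set ℝ := {r : ℝ | ∃ y : Fin d → ℝ,
      (∀ i, y i ∈ Set.Icc (0:ℝ) 1) ∧ t - δ ≤ h y ∧ r = IpVec p y} with hS
  have hw : ∀ x : Fin d → Bool, 0 ≤ cubeWeight p x := cubeWeight_nonneg hp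
  have hSbdd : BddBelow S := by
    refine ⟨-(2*d), ?_⟩
    rintro r ⟨y, hy, -, rfl⟩
    exact IpVec_lower hp hy
  set A : I → Finset (Fin d → Bool) := fun i =>
    Finset.univ.filter (fun x => cubeEmbed x ∈ B i ∧ t ≤ h (cubeEmbed x)) with hA
  have hbound : ∀ i : I, ∑ x ∈ A i, cubeWeight p x ≤ Real.exp (-(sInf S)) := by
    intro i
    rcases le_or_gt (∑ x ∈ A i, cubeWeight p x) 0 with hle | hpos
    · exact hle.trans (Real.exp_pos _).le
    · have hk := key_bound hp (A i) hpos
      have hy01 := fun j => ybar_mem hp hpos j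
      obtain ⟨x₀, hx₀⟩ : (A i).Nonempty := Finset.nonempty_of_sum_ne_zero (ne_of_gt hpos)
      have hx₀' := Finset.mem_filter.1 hx₀
      have hmemB : ybar p (A i) ∈ B i := by
        rw [ybar_eq_sum]
        apply (hBconvex i).sum_mem
        · intro x hx; exact div_nonneg (hw x) hpos.le
        · rw [← Finset.sum_div]; field_simp
        · intro x hx; exact ((Finset.mem_filter.1 hx).2).1
      have hhy : t - δ ≤ h (ybar p (A i)) := by
        have := hfluct i (ybar p (A i)) hmemB (cubeEmbed x₀) hx₀'.2.1
        linarith [hx₀'.2.2]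
      have hin : IpVec p (ybar p (A i)) ∈ S := ⟨ybar p (A i), hy01, hhy, rfl⟩
      have hle2 : sInf S ≤ IpVec p (ybar p (A i)) := csInf_le hSbdd hin
      exact hk.trans (Real.exp_le_exp.2 (by linarith))
  set F : Finset (Fin d → Bool) :=
    Finset.univ.filter (fun x : Fin d → Bool => t ≤ h (cubeEmbed x)) with hF
  have split : ∑ x ∈ F, cubeWeight p x
      ≤ ∑ x ∈ F \ E, cubeWeight p x + ∑ x ∈ E, cubeWeight p x := by
    have h1 : ∑ x ∈ F ∩ E, cubeWeight p x + ∑ x ∈ F \ E, cubeWeight p x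
        = ∑ x ∈ F, cubeWeight p x := Finset.sum_inter_add_sum_sdiff F E _
    have h2 : ∑ x ∈ F ∩ E, cubeWeight p x ≤ ∑ x ∈ E, cubeWeight p x :=
      Finset.sum_le_sum_of_subset_of_nonneg Finset.inter_subset_right (fun x _ _ => hw x)
    linarith
  have hub : ∑ x ∈ F \ E, cubeWeight p x ≤ ∑ i : I, ∑ x ∈ A i, cubeWeight p x := by
    calc ∑ x ∈ F \ E, cubeWeight p x
        ≤ ∑ x ∈ F \ E, ∑ i : I, (if x ∈ A i then cubeWeight p x else 0) := by
          apply Finset.sum_le_sum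
          intro x hx
          have hxF := (Finset.mem_sdiff.1 hx).1
          have hxE := (Finset.mem_sdiff.1 hx).2
          obtain ⟨i, hi⟩ := hcover x hxE
          have hxAi : x ∈ A i :=
            Finset.mem_filter.2 ⟨Finset.mem_univ x, hi, (Finset.mem_filter.1 hxF).2⟩
          calc cubeWeight p x = (if x ∈ A i then cubeWeight p x else 0) := by simp [hxAi]
            _ ≤ ∑ j : I, (if x ∈ A j then cubeWeight p x else 0) :=
              Finset.single_le_sum (f := fun j => if x ∈ A j then cubeWeight p x else 0)
                (fun j _ => by by_cases hj : x ∈ A j <;> simp [hj, hw x]) (Finset.mem_univ i)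
      _ = ∑ i : I, ∑ x ∈ F \ E, (if x ∈ A i then cubeWeight p x else 0) := Finset.sum_comm
      _ ≤ ∑ i : I, ∑ x ∈ A i, cubeWeight p x := by
          apply Finset.sum_le_sum
          intro i _
          rw [Finset.sum_ite_mem]
          exact Finset.sum_le_sum_of_subset_of_nonneg Finset.inter_subset_right
            (fun x _ _ => hw x)
  calc ∑ x ∈ F, cubeWeight p x
      ≤ ∑ x ∈ F \ E, cubeWeight p x + ∑ x ∈ E, cubeWeight p x := split
    _ ≤ (∑ _i : I, Real.exp (-(sInf S))) + ∑ x ∈ E, cubeWeight p x :=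
        add_le_add_left (hub.trans (Finset.sum_le_sum fun i _ => hbound i)) _
    _ = (Fintype.card I : ℝ) * Real.exp (-(sInf S)) + ∑ x ∈ E, cubeWeight p x := by
        rw [Finset.sum_const, Finset.card_univ, nsmul_eq_mul]
end

section
/- For any two N×N real symmetric matrices M_1, M_2 and any positive integer ℓ, |Tr(M_1^ℓ) − Tr(M_2^ℓ)| ≤ ℓ · ‖M_1 − M_2‖_op · (‖M_1‖_{S_{ℓ−1}}^{ℓ−1} + ‖M_2‖_{S_{ℓ−1}}^{ℓ−1}), where ‖X‖_{S_α} = (Σ_j |λ_j(X)|^α)^{1/α} is the Schatten α-norm and ‖·‖_op is the operator norm. -/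
/-- The ℓ²→ℓ² operator norm of a real N×N matrix. -/
noncomputable def opNorm {N : ℕ} (M : Matrix (Fin N) (Fin N) ℝ) : ℝ :=
  ‖(Matrix.toEuclideanCLM (𝕜 := ℝ) M : EuclideanSpace ℝ (Fin N) →L[ℝ] EuclideanSpace ℝ (Fin N))‖

open Matrix Finset
open scoped RealInnerProductSpace

theorem trace_pow_eq {N : ℕ} (A : Matrix (Fin N) (Fin N) ℝ) (hA : A.IsHermitian) (ℓ : ℕ) :
    Matrix.trace (A ^ ℓ) = ∑ j, hA.eigenvalues j ^ ℓ := by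
  set U : Matrix (Fin N) (Fin N) ℝ := (hA.eigenvectorUnitary : Matrix (Fin N) (Fin N) ℝ) with hUdef
  set D : Matrix (Fin N) (Fin N) ℝ := diagonal (RCLike.ofReal ∘ hA.eigenvalues) with hD
  have hU : star U * U = 1 := hA.eigenvectorUnitary.prop.1
  have hU' : U * star U = 1 := hA.eigenvectorUnitary.prop.2
  have hspec : A = U * D * star U := hA.spectral_theorem
  have key : A ^ ℓ = U * D ^ ℓ * star U := by
    induction ℓ with
    | zero => simp [pow_zero, Matrix.mul_one, hU']
    | succ n ih =>
      calc A ^ (n+1) = (U * D ^ n * star U) * (U * D * star U) := by rw [pow_succ, ih, ← hspec]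
      _ = U * D ^ (n+1) * star U := by
          rw [pow_succ]
          simp only [Matrix.mul_assoc]
          congr 2
          rw [← Matrix.mul_assoc, ← Matrix.mul_assoc, hU, Matrix.one_mul]
  rw [key, Matrix.trace_mul_cycle, hU, Matrix.one_mul, hD,
    Matrix.diagonal_pow, Matrix.trace_diagonal]
  simp

theorem pow_diff_le (a b : ℝ) (ℓ : ℕ) :
    |a ^ ℓ - b ^ ℓ| ≤ (ℓ : ℝ) * |a - b| * (|a| ^ (ℓ - 1) + |b| ^ (ℓ - 1)) := by
  have key : a ^ ℓ - b ^ ℓ = (∑ i ∈ Finset.range ℓ, a ^ i * b ^ (ℓ - 1 - i)) * (a - b) :=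
    (geom_sum₂_mul a b ℓ).symm
  rw [key, abs_mul]
  have hbound : |∑ i ∈ Finset.range ℓ, a ^ i * b ^ (ℓ - 1 - i)|
      ≤ (ℓ : ℝ) * (|a| ^ (ℓ - 1) + |b| ^ (ℓ - 1)) := by
    calc |∑ i ∈ Finset.range ℓ, a ^ i * b ^ (ℓ - 1 - i)|
        ≤ ∑ i ∈ Finset.range ℓ, |a ^ i * b ^ (ℓ - 1 - i)| := Finset.abs_sum_le_sum_abs _ _
      _ ≤ ∑ i ∈ Finset.range ℓ, (|a| ^ (ℓ - 1) + |b| ^ (ℓ - 1)) := by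
          apply Finset.sum_le_sum
          intro i hi
          rw [Finset.mem_range] at hi
          rw [abs_mul, abs_pow, abs_pow]
          have hie : i + (ℓ - 1 - i) = ℓ - 1 := by omega
          rcases le_total |a| |b| with h | h
          · calc |a| ^ i * |b| ^ (ℓ - 1 - i) ≤ |b| ^ i * |b| ^ (ℓ - 1 - i) := by
                  apply mul_le_mul_of_nonneg_right (pow_le_pow_left₀ (abs_nonneg a) h i)
                    (pow_nonneg (abs_nonneg b) _)
            _ = |b| ^ (ℓ - 1) := by rw [← pow_add, hie]
            _ ≤ |a| ^ (ℓ - 1) + |b| ^ (ℓ - 1) := le_add_of_nonneg_left (pow_nonneg (abs_nonneg a) _)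
          · calc |a| ^ i * |b| ^ (ℓ - 1 - i) ≤ |a| ^ i * |a| ^ (ℓ - 1 - i) := by
                  apply mul_le_mul_of_nonneg_left (pow_le_pow_left₀ (abs_nonneg b) h _)
                    (pow_nonneg (abs_nonneg a) _)
            _ = |a| ^ (ℓ - 1) := by rw [← pow_add, hie]
            _ ≤ |a| ^ (ℓ - 1) + |b| ^ (ℓ - 1) := le_add_of_nonneg_right (pow_nonneg (abs_nonneg b) _)
      _ = (ℓ : ℝ) * (|a| ^ (ℓ - 1) + |b| ^ (ℓ - 1)) := by
          rw [Finset.sum_const, Finset.card_range, nsmul_eq_mul]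
  calc |∑ i ∈ Finset.range ℓ, a ^ i * b ^ (ℓ - 1 - i)| * |a - b|
      ≤ (ℓ : ℝ) * (|a| ^ (ℓ - 1) + |b| ^ (ℓ - 1)) * |a - b| :=
        mul_le_mul_of_nonneg_right hbound (abs_nonneg _)
    _ = (ℓ : ℝ) * |a - b| * (|a| ^ (ℓ - 1) + |b| ^ (ℓ - 1)) := by ring

theorem clm_apply_basis {N : ℕ} {A : Matrix (Fin N) (Fin N) ℝ} (hA : A.IsHermitian) (i : Fin N) :
    Matrix.toEuclideanCLM (𝕜 := ℝ) A (hA.eigenvectorBasis i) =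
      hA.eigenvalues i • hA.eigenvectorBasis i := by
  apply (WithLp.equiv _ _).injective
  rw [WithLp.equiv_apply, WithLp.equiv_apply, Matrix.ofLp_toEuclideanCLM]
  simp only [WithLp.ofLp_smul]
  exact hA.mulVec_eigenvectorBasis i

theorem clm_symmetric {N : ℕ} {A : Matrix (Fin N) (Fin N) ℝ} (hA : A.IsHermitian)
    (x y : EuclideanSpace ℝ (Fin N)) : ⟪Matrix.toEuclideanCLM (𝕜 := ℝ) A x, y⟫
      = ⟪x, Matrix.toEuclideanCLM (𝕜 := ℝ) A y⟫ := by
  have h := (Matrix.isHermitian_iff_isSymmetric.mp hA) x y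
  rwa [← Matrix.coe_toEuclideanCLM_eq_toEuclideanLin] at h

theorem inner_clm_eq {N : ℕ} {A : Matrix (Fin N) (Fin N) ℝ} (hA : A.IsHermitian)
    (x : EuclideanSpace ℝ (Fin N)) :
    ⟪x, Matrix.toEuclideanCLM (𝕜 := ℝ) A x⟫ =
      ∑ i, hA.eigenvalues i * ⟪x, hA.eigenvectorBasis i⟫ ^ 2 := by
  rw [← OrthonormalBasis.sum_inner_mul_inner hA.eigenvectorBasis]
  apply Finset.sum_congr rfl
  intro i _
  rw [← clm_symmetric hA, clm_apply_basis hA, inner_smul_left]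
  have : ⟪hA.eigenvectorBasis i, x⟫ = ⟪x, hA.eigenvectorBasis i⟫ := real_inner_comm _ _
  simp only [RCLike.star_def, starRingEnd_apply, star_trivial]
  rw [this]; ring

theorem mem_span_inner_zero {N : ℕ} {A : Matrix (Fin N) (Fin N) ℝ} (hA : A.IsHermitian)
    (s : Finset (Fin N)) {x : EuclideanSpace ℝ (Fin N)}
    (hx : x ∈ Submodule.span ℝ (hA.eigenvectorBasis '' (s : Set (Fin N))))
    {i : Fin N} (hi : i ∉ s) : ⟪x, hA.eigenvectorBasis i⟫ = 0 := by
  have hle : Submodule.span ℝ (hA.eigenvectorBasis '' (s : Set (Fin N))) ≤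
      LinearMap.ker ((innerSL ℝ (hA.eigenvectorBasis i)).toLinearMap) := by
    rw [Submodule.span_le]
    rintro _ ⟨j, hj, rfl⟩
    have hij : i ≠ j := fun h => hi (h ▸ hj)
    simp only [SetLike.mem_coe, LinearMap.mem_ker, ContinuousLinearMap.coe_coe, innerSL_apply_apply]
    exact hA.eigenvectorBasis.orthonormal.2 hij
  have := hle hx
  rw [LinearMap.mem_ker] at this
  rw [real_inner_comm]; simpa using this

theorem finrank_span_basis {N : ℕ} {A : Matrix (Fin N) (Fin N) ℝ} (hA : A.IsHermitian)
    (s : Finset (Fin N)) :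
    Module.finrank ℝ (Submodule.span ℝ (hA.eigenvectorBasis '' (s : Set (Fin N)))) = s.card := by
  have hli : LinearIndependent ℝ (fun i : (s : Set (Fin N)) => hA.eigenvectorBasis i) :=
    hA.eigenvectorBasis.orthonormal.linearIndependent.comp Subtype.val Subtype.val_injective
  have : (hA.eigenvectorBasis '' (s : Set (Fin N))) =
      Set.range (fun i : (s : Set (Fin N)) => hA.eigenvectorBasis i) := by
    ext y; simp
  rw [this, finrank_span_eq_card hli]
  simp

theorem quad_upper {N : ℕ} {A : Matrix (Fin N) (Fin N) ℝ} (hA : A.IsHermitian)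
    (s : Finset (Fin N)) {c : ℝ} (hc : ∀ i ∈ s, hA.eigenvalues i ≤ c)
    {x : EuclideanSpace ℝ (Fin N)}
    (hx : x ∈ Submodule.span ℝ (hA.eigenvectorBasis '' (s : Set (Fin N)))) :
    ⟪x, Matrix.toEuclideanCLM (𝕜 := ℝ) A x⟫ ≤ c * ‖x‖ ^ 2 := by
  have hnorm : ‖x‖ ^ 2 = ∑ i, ⟪x, hA.eigenvectorBasis i⟫ ^ 2 := by
    rw [← real_inner_self_eq_norm_sq, ← OrthonormalBasis.sum_inner_mul_inner hA.eigenvectorBasis]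
    apply Finset.sum_congr rfl; intro i _
    rw [real_inner_comm (hA.eigenvectorBasis i) x]; ring
  rw [inner_clm_eq hA, hnorm, Finset.mul_sum]
  apply Finset.sum_le_sum
  intro i _
  by_cases hi : i ∈ s
  · exact mul_le_mul_of_nonneg_right (hc i hi) (sq_nonneg _)
  · rw [mem_span_inner_zero hA s hx hi]; simp

theorem quad_lower {N : ℕ} {A : Matrix (Fin N) (Fin N) ℝ} (hA : A.IsHermitian)
    (s : Finset (Fin N)) {c : ℝ} (hc : ∀ i ∈ s, c ≤ hA.eigenvalues i)
    {x : EuclideanSpace ℝ (Fin N)}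
    (hx : x ∈ Submodule.span ℝ (hA.eigenvectorBasis '' (s : Set (Fin N)))) :
    c * ‖x‖ ^ 2 ≤ ⟪x, Matrix.toEuclideanCLM (𝕜 := ℝ) A x⟫ := by
  have hnorm : ‖x‖ ^ 2 = ∑ i, ⟪x, hA.eigenvectorBasis i⟫ ^ 2 := by
    rw [← real_inner_self_eq_norm_sq, ← OrthonormalBasis.sum_inner_mul_inner hA.eigenvectorBasis]
    apply Finset.sum_congr rfl; intro i _
    rw [real_inner_comm (hA.eigenvectorBasis i) x]; ring
  rw [inner_clm_eq hA, hnorm, Finset.mul_sum]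
  apply Finset.sum_le_sum
  intro i _
  by_cases hi : i ∈ s
  · exact mul_le_mul_of_nonneg_right (hc i hi) (sq_nonneg _)
  · rw [mem_span_inner_zero hA s hx hi]; simp

theorem weyl_one {N : ℕ} {A B : Matrix (Fin N) (Fin N) ℝ} (hA : A.IsHermitian)
    (hB : B.IsHermitian) (σ τ : Equiv.Perm (Fin N))
    (hσ : Monotone (hA.eigenvalues ∘ σ)) (hτ : Monotone (hB.eigenvalues ∘ τ)) (j : Fin N) :
    hA.eigenvalues (σ j) ≤ hB.eigenvalues (τ j) +
      ‖(Matrix.toEuclideanCLM (𝕜 := ℝ) (A - B) :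
        EuclideanSpace ℝ (Fin N) →L[ℝ] EuclideanSpace ℝ (Fin N))‖ := by
  classical
  set sA : Finset (Fin N) := (Finset.Ici j).image σ with hsA
  set sB : Finset (Fin N) := (Finset.Iic j).image τ with hsB
  set SA := Submodule.span ℝ (hA.eigenvectorBasis '' (sA : Set (Fin N)))
  set SB := Submodule.span ℝ (hB.eigenvectorBasis '' (sB : Set (Fin N)))
  have hcardA : sA.card = N - (j : ℕ) := by
    rw [hsA, Finset.card_image_of_injective _ σ.injective, Fin.card_Ici]
  have hcardB : sB.card = (j : ℕ) + 1 := by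
    rw [hsB, Finset.card_image_of_injective _ τ.injective, Fin.card_Iic]
  have hdim : 0 < Module.finrank ℝ (SA ⊓ SB : Submodule ℝ (EuclideanSpace ℝ (Fin N))) := by
    have hsum := Submodule.finrank_sup_add_finrank_inf_eq SA SB
    have hA' : Module.finrank ℝ SA = N - (j : ℕ) := by
      rw [show SA = _ from rfl, finrank_span_basis hA sA, hcardA]
    have hB' : Module.finrank ℝ SB = (j : ℕ) + 1 := by
      rw [show SB = _ from rfl, finrank_span_basis hB sB, hcardB]
    have hle : Module.finrank ℝ (SA ⊔ SB : Submodule ℝ (EuclideanSpace ℝ (Fin N))) ≤ N := by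
      have := Submodule.finrank_le (SA ⊔ SB)
      simpa [finrank_euclideanSpace] using this
    have hj : (j : ℕ) < N := j.isLt
    omega
  have hne : SA ⊓ SB ≠ ⊥ := by
    intro h
    rw [h, finrank_bot] at hdim
    exact lt_irrefl 0 hdim
  obtain ⟨x, hxmem, hx0⟩ := (Submodule.ne_bot_iff _).mp hne
  have hq : (0 : ℝ) < ‖x‖ ^ 2 := pow_pos (norm_pos_iff.mpr hx0) 2
  have hlow : hA.eigenvalues (σ j) * ‖x‖ ^ 2 ≤ ⟪x, Matrix.toEuclideanCLM (𝕜 := ℝ) A x⟫ := by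
    apply quad_lower hA sA _ hxmem.1
    rintro i hi
    rw [hsA, Finset.mem_image] at hi
    obtain ⟨k, hk, rfl⟩ := hi
    exact hσ (Finset.mem_Ici.mp hk)
  have hup : ⟪x, Matrix.toEuclideanCLM (𝕜 := ℝ) B x⟫ ≤ hB.eigenvalues (τ j) * ‖x‖ ^ 2 := by
    apply quad_upper hB sB _ hxmem.2
    rintro i hi
    rw [hsB, Finset.mem_image] at hi
    obtain ⟨k, hk, rfl⟩ := hi
    exact hτ (Finset.mem_Iic.mp hk)
  set D := (Matrix.toEuclideanCLM (𝕜 := ℝ) (A - B) :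
    EuclideanSpace ℝ (Fin N) →L[ℝ] EuclideanSpace ℝ (Fin N)) with hD
  have hDsplit : Matrix.toEuclideanCLM (𝕜 := ℝ) A x = Matrix.toEuclideanCLM (𝕜 := ℝ) B x + D x := by
    rw [hD, map_sub]; simp
  have hinner : ⟪x, D x⟫ ≤ ‖D‖ * ‖x‖ ^ 2 := by
    calc ⟪x, D x⟫ ≤ ‖x‖ * ‖D x‖ := real_inner_le_norm _ _
      _ ≤ ‖x‖ * (‖D‖ * ‖x‖) := by
          apply mul_le_mul_of_nonneg_left (D.le_opNorm x) (norm_nonneg x)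
      _ = ‖D‖ * ‖x‖ ^ 2 := by ring
  have key : hA.eigenvalues (σ j) * ‖x‖ ^ 2 ≤
      (hB.eigenvalues (τ j) + ‖D‖) * ‖x‖ ^ 2 := by
    calc hA.eigenvalues (σ j) * ‖x‖ ^ 2 ≤ ⟪x, Matrix.toEuclideanCLM (𝕜 := ℝ) A x⟫ := hlow
      _ = ⟪x, Matrix.toEuclideanCLM (𝕜 := ℝ) B x⟫ + ⟪x, D x⟫ := by
          rw [hDsplit, inner_add_right]
      _ ≤ hB.eigenvalues (τ j) * ‖x‖ ^ 2 + ‖D‖ * ‖x‖ ^ 2 := add_le_add hup hinner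
      _ = (hB.eigenvalues (τ j) + ‖D‖) * ‖x‖ ^ 2 := by ring
  exact le_of_mul_le_mul_right (by linarith [key]) hq

theorem weyl_abs {N : ℕ} {A B : Matrix (Fin N) (Fin N) ℝ} (hA : A.IsHermitian)
    (hB : B.IsHermitian) (σ τ : Equiv.Perm (Fin N))
    (hσ : Monotone (hA.eigenvalues ∘ σ)) (hτ : Monotone (hB.eigenvalues ∘ τ)) (j : Fin N) :
    |hA.eigenvalues (σ j) - hB.eigenvalues (τ j)| ≤ opNorm (A - B) := by
  have hnorm : opNorm (B - A) = opNorm (A - B) := by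
    unfold opNorm
    rw [show B - A = -(A - B) from (neg_sub A B).symm, map_neg, norm_neg]
  rw [abs_sub_le_iff]
  constructor
  · have := weyl_one hA hB σ τ hσ hτ j
    unfold opNorm; linarith
  · have := weyl_one hB hA τ σ hτ hσ j
    unfold opNorm at hnorm ⊢; linarith

/-- for symmetric matrices `M₁, M₂` and a positive integer `ℓ`,
`|Tr M₁^ℓ − Tr M₂^ℓ| ≤ ℓ‖M₁−M₂‖_op (‖M₁‖_{S_{ℓ−1}}^{ℓ−1} + ‖M₂‖_{S_{ℓ−1}}^{ℓ−1})`,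
where `‖M‖_{S_α}^α = Σ_j |λ_j(M)|^α`. -/
theorem trace_pow_diff_le {N : ℕ} (M₁ M₂ : Matrix (Fin N) (Fin N) ℝ)
    (h₁ : M₁.IsHermitian) (h₂ : M₂.IsHermitian) (ℓ : ℕ) (hℓ : 1 ≤ ℓ) :
    |Matrix.trace (M₁ ^ ℓ) - Matrix.trace (M₂ ^ ℓ)| ≤
      (ℓ : ℝ) * opNorm (M₁ - M₂) *
        ((∑ j, |h₁.eigenvalues j| ^ (ℓ - 1)) + ∑ j, |h₂.eigenvalues j| ^ (ℓ - 1)) := by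
  classical
  set σ := Tuple.sort h₁.eigenvalues
  set τ := Tuple.sort h₂.eigenvalues
  have hσ : Monotone (h₁.eigenvalues ∘ σ) := Tuple.monotone_sort _
  have hτ : Monotone (h₂.eigenvalues ∘ τ) := Tuple.monotone_sort _
  have hop : (0 : ℝ) ≤ opNorm (M₁ - M₂) := norm_nonneg _
  have t1 : Matrix.trace (M₁ ^ ℓ) = ∑ j, h₁.eigenvalues (σ j) ^ ℓ := by
    rw [trace_pow_eq M₁ h₁ ℓ, ← Equiv.sum_comp σ (fun j => h₁.eigenvalues j ^ ℓ)]
  have t2 : Matrix.trace (M₂ ^ ℓ) = ∑ j, h₂.eigenvalues (τ j) ^ ℓ := by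
    rw [trace_pow_eq M₂ h₂ ℓ, ← Equiv.sum_comp τ (fun j => h₂.eigenvalues j ^ ℓ)]
  have s1 : ∑ j, |h₁.eigenvalues j| ^ (ℓ - 1) = ∑ j, |h₁.eigenvalues (σ j)| ^ (ℓ - 1) :=
    (Equiv.sum_comp σ (fun j => |h₁.eigenvalues j| ^ (ℓ - 1))).symm
  have s2 : ∑ j, |h₂.eigenvalues j| ^ (ℓ - 1) = ∑ j, |h₂.eigenvalues (τ j)| ^ (ℓ - 1) :=
    (Equiv.sum_comp τ (fun j => |h₂.eigenvalues j| ^ (ℓ - 1))).symm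
  rw [t1, t2, s1, s2, ← Finset.sum_sub_distrib]
  calc |∑ j, (h₁.eigenvalues (σ j) ^ ℓ - h₂.eigenvalues (τ j) ^ ℓ)|
      ≤ ∑ j, |h₁.eigenvalues (σ j) ^ ℓ - h₂.eigenvalues (τ j) ^ ℓ| :=
        Finset.abs_sum_le_sum_abs _ _
    _ ≤ ∑ j, (ℓ : ℝ) * opNorm (M₁ - M₂) *
          (|h₁.eigenvalues (σ j)| ^ (ℓ - 1) + |h₂.eigenvalues (τ j)| ^ (ℓ - 1)) := by
        apply Finset.sum_le_sum
        intro j _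
        calc |h₁.eigenvalues (σ j) ^ ℓ - h₂.eigenvalues (τ j) ^ ℓ|
            ≤ (ℓ : ℝ) * |h₁.eigenvalues (σ j) - h₂.eigenvalues (τ j)| *
              (|h₁.eigenvalues (σ j)| ^ (ℓ - 1) + |h₂.eigenvalues (τ j)| ^ (ℓ - 1)) :=
              pow_diff_le _ _ ℓ
          _ ≤ (ℓ : ℝ) * opNorm (M₁ - M₂) *
              (|h₁.eigenvalues (σ j)| ^ (ℓ - 1) + |h₂.eigenvalues (τ j)| ^ (ℓ - 1)) := by
              apply mul_le_mul_of_nonneg_right _ (by positivity)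
              exact mul_le_mul_of_nonneg_left (weyl_abs h₁ h₂ σ τ hσ hτ j) (Nat.cast_nonneg ℓ)
    _ = (ℓ : ℝ) * opNorm (M₁ - M₂) *
          ((∑ j, |h₁.eigenvalues (σ j)| ^ (ℓ - 1)) + ∑ j, |h₂.eigenvalues (τ j)| ^ (ℓ - 1)) := by
        rw [← Finset.mul_sum, Finset.sum_add_distrib]
end

section
/- For 0 < q < p < 1, α ∈ [2,∞], and N ∈ ℕ, the infimum of I_p(X) over all symmetric N×N matrices X with entries in [0,1], zero diagonal, and Schatten norm ‖X‖_{S_α} ≤ (N−1)q, is at least (N choose 2)·I_p(q), where I_p(q) = q log(q/p) + (1−q) log((1−q)/(1−p)). -/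
open scoped ENNReal
/-- `I_p(X) = Σ_{i<j} I_p(X_{ij})`. -/
noncomputable def IpMat {N : ℕ} (p : ℝ) (X : Matrix (Fin N) (Fin N) ℝ) : ℝ :=
  ∑ q ∈ Finset.univ.filter (fun q : Fin N × Fin N => q.1 < q.2), Ip p (X q.1 q.2)

/-- Schatten norm of index `α ∈ [1,∞]` of a symmetric real matrix:
`(Σ_j |λ_j|^α)^{1/α}`, and the operator norm for `α = ∞`. -/
noncomputable def schattenNorm {N : ℕ} (α : ℝ≥0∞) (X : Matrix (Fin N) (Fin N) ℝ)
    (hX : X.IsHermitian) : ℝ :=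
  if α = ⊤ then opNorm X
  else (∑ j, |hX.eigenvalues j| ^ α.toReal) ^ ((1 : ℝ) / α.toReal)

open Matrix in
theorem quad_form_le {N : ℕ} (X : Matrix (Fin N) (Fin N) ℝ) (hX : X.IsHermitian) (M : ℝ)
    (hM : ∀ j, |hX.eigenvalues j| ≤ M) (v : Fin N → ℝ) :
    v ⬝ᵥ X *ᵥ v ≤ M * (v ⬝ᵥ v) := by
  set U : Matrix (Fin N) (Fin N) ℝ := (hX.eigenvectorUnitary : Matrix (Fin N) (Fin N) ℝ) with hU
  set w : Fin N → ℝ := fun j => ∑ i, U i j * v i with hw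
  have hsU : star U = Uᵀ := by
    ext i j
    simp [Matrix.star_eq_conjTranspose, Matrix.conjTranspose_apply]
  have hstar : star U *ᵥ v = w := by
    funext j
    simp [hsU, Matrix.mulVec, dotProduct, hw]
  have hvec : v ᵥ* U = w := by
    funext j
    simp [Matrix.vecMul, dotProduct, hw, mul_comm]
  have h1 : v ⬝ᵥ X *ᵥ v = ∑ j, hX.eigenvalues j * w j ^ 2 := by
    calc v ⬝ᵥ X *ᵥ v
        = (v ᵥ* U) ⬝ᵥ ((Matrix.diagonal (RCLike.ofReal ∘ hX.eigenvalues)) *ᵥ (star U *ᵥ v)) := by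
          conv_lhs => rw [hX.spectral_theorem, Unitary.conjStarAlgAut_apply]
          rw [← Matrix.mulVec_mulVec, ← Matrix.mulVec_mulVec, Matrix.dotProduct_mulVec]
      _ = ∑ j, hX.eigenvalues j * w j ^ 2 := by
          rw [hvec, hstar]
          simp only [dotProduct, Matrix.mulVec_diagonal, Function.comp_apply,
            RCLike.ofReal_real_eq_id, id_eq]
          exact Finset.sum_congr rfl fun j _ => by ring
  have h2 : ∑ j, w j ^ 2 = v ⬝ᵥ v := by
    have : (v ᵥ* U) ⬝ᵥ (star U *ᵥ v) = v ⬝ᵥ v := by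
      rw [← Matrix.dotProduct_mulVec, Matrix.mulVec_mulVec,
        (Matrix.mem_unitaryGroup_iff).mp hX.eigenvectorUnitary.2, Matrix.one_mulVec]
    rw [← this, hvec, hstar]
    simp [dotProduct, sq]
  rw [h1, ← h2, Finset.mul_sum]
  refine Finset.sum_le_sum fun j _ => ?_
  have h3 : (0:ℝ) ≤ w j ^ 2 := sq_nonneg _
  calc hX.eigenvalues j * w j ^ 2 ≤ |hX.eigenvalues j| * w j ^ 2 :=
        mul_le_mul_of_nonneg_right (le_abs_self _) h3
    _ ≤ M * w j ^ 2 := mul_le_mul_of_nonneg_right (hM j) h3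

open Matrix in
theorem quad_form_le_op {N : ℕ} (X : Matrix (Fin N) (Fin N) ℝ) (v : Fin N → ℝ) :
    v ⬝ᵥ X *ᵥ v ≤ opNorm X * (v ⬝ᵥ v) := by
  set T := (Matrix.toEuclideanCLM (𝕜 := ℝ) X : EuclideanSpace ℝ (Fin N) →L[ℝ] EuclideanSpace ℝ (Fin N))
  set u : EuclideanSpace ℝ (Fin N) := (WithLp.equiv 2 _).symm v with hu
  have hTu : T u = (WithLp.equiv 2 _).symm (X *ᵥ v) := rfl
  have hinner : v ⬝ᵥ (X *ᵥ v) = (inner ℝ u (T u) : ℝ) := by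
    rw [EuclideanSpace.inner_eq_star_dotProduct, hTu]
    simp [dotProduct, hu, mul_comm]
  have hself : v ⬝ᵥ v = ‖u‖ ^ 2 := by
    rw [← real_inner_self_eq_norm_sq]
    rw [EuclideanSpace.inner_eq_star_dotProduct]
    simp [dotProduct, hu]
  calc v ⬝ᵥ X *ᵥ v = (inner ℝ u (T u) : ℝ) := hinner
    _ ≤ ‖u‖ * ‖T u‖ := real_inner_le_norm _ _
    _ ≤ ‖u‖ * (‖T‖ * ‖u‖) := by
        exact mul_le_mul_of_nonneg_left (T.le_opNorm u) (norm_nonneg _)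
    _ = opNorm X * (v ⬝ᵥ v) := by rw [hself]; unfold opNorm; ring

theorem card_pairs {N : ℕ} :
    (Finset.univ.filter (fun q : Fin N × Fin N => q.1 < q.2)).card = N.choose 2 := by
  rw [Finset.card_filter, Fintype.sum_prod_type, Nat.choose_two_right]
  have h1 : ∀ i : Fin N, (∑ j : Fin N, if i < j then 1 else 0) = N - 1 - (i : ℕ) := by
    intro i
    rw [← Finset.card_filter]
    have : (Finset.univ.filter fun j : Fin N => i < j) = Finset.Ioi i := by
      ext j; simp
    rw [this, Fin.card_Ioi]
  simp only [h1]
  rw [Fin.sum_univ_eq_sum_range (fun k => N - 1 - k) N, ← Finset.sum_range_reflect,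
    ← Finset.sum_range_id N]
  apply Finset.sum_congr rfl
  intro k hk
  simp only [Finset.mem_range] at hk
  omega

theorem Ip_nonneg (q x : ℝ) (hq0 : 0 < q) (hq1 : q < 1) (hx0 : 0 ≤ x) (hx1 : x ≤ 1) :
    0 ≤ Ip q x := by
  unfold Ip
  have key : ∀ a b : ℝ, 0 < b → 0 ≤ a → a ≤ 1 → a - b ≤ a * Real.log (a / b) := by
    intro a b hb ha0 _
    rcases eq_or_lt_of_le ha0 with h | h
    · simp [← h]; linarith
    · have hlog : Real.log (b / a) ≤ b / a - 1 :=
        Real.log_le_sub_one_of_pos (div_pos hb h)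
      have : Real.log (a / b) = - Real.log (b / a) := by
        rw [← Real.log_inv]; congr 1; field_simp
      have h4 : a * (b / a - 1) = b - a := by field_simp
      nlinarith [mul_le_mul_of_nonneg_left hlog (le_of_lt h)]
  have h1 := key x q hq0 hx0 hx1
  have h2 := key (1 - x) (1 - q) (by linarith) (by linarith) (by linarith)
  linarith

theorem Ip_decomp (p q x : ℝ) (hp0 : 0 < p) (hp1 : p < 1) (hq0 : 0 < q) (hq1 : q < 1)
    (hx0 : 0 ≤ x) (hx1 : x ≤ 1) :
    Ip p x = Ip q x + x * Real.log (q / p) + (1 - x) * Real.log ((1 - q) / (1 - p)) := by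
  unfold Ip
  have key : ∀ a b c : ℝ, 0 < b → 0 < c → 0 ≤ a →
      a * Real.log (a / b) = a * Real.log (a / c) + a * Real.log (c / b) := by
    intro a b c hb hc ha
    rcases eq_or_lt_of_le ha with h | h
    · simp [← h]
    · rw [← mul_add, ← Real.log_mul (by positivity) (by positivity)]
      congr 2
      field_simp
  have h1 := key x p q hp0 hq0 hx0
  have h2 := key (1 - x) (1 - p) (1 - q) (by linarith) (by linarith) (by linarith)
  linarith

theorem Ip_self (q : ℝ) (h0 : q ≠ 0) (h1 : q ≠ 1) : Ip q q = 0 := by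
  have : (1:ℝ) - q ≠ 0 := sub_ne_zero.2 (Ne.symm h1)
  simp [Ip, div_self h0, div_self this]

open Matrix in
/-- for `0 < q < p < 1`, `α ∈ [2,∞]` and any symmetric N×N matrix `X`
with entries in `[0,1]`, zero diagonal, and `‖X‖_{S_α} ≤ (N−1)q`, one has
`I_p(X) ≥ (N choose 2)·I_p(q)`; i.e. the infimum of `I_p` over this sub-level set is
at least `(N choose 2)·I_p(q)`. -/
theorem lower_tail_schatten_variational {N : ℕ} (p q : ℝ)
    (hq0 : 0 < q) (hqp : q < p) (hp1 : p < 1) (α : ℝ≥0∞) (hα : 2 ≤ α)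
    (X : Matrix (Fin N) (Fin N) ℝ) (hX : X.IsHermitian)
    (hX01 : ∀ i j, X i j ∈ Set.Icc (0:ℝ) 1) (hdiag : ∀ i, X i i = 0)
    (hnorm : schattenNorm α X hX ≤ ((N : ℝ) - 1) * q) :
    (N.choose 2 : ℝ) * Ip p q ≤ IpMat p X := by
  have hp0 : 0 < p := lt_trans hq0 hqp
  have hq1 : q < 1 := lt_trans hqp hp1
  set s := Finset.univ.filter (fun q : Fin N × Fin N => q.1 < q.2) with hs
  set S := ∑ e ∈ s, X e.1 e.2 with hS
  set v : Fin N → ℝ := fun _ => 1 with hv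
  have hsym : ∀ i j, X j i = X i j := by
    intro i j
    have := congrFun (congrFun hX i) j
    simpa [Matrix.conjTranspose_apply] using this
  -- entries of the Schatten bound
  have hbound : v ⬝ᵥ X *ᵥ v ≤ ((N : ℝ) - 1) * q * N := by
    have hvv : v ⬝ᵥ v = (N : ℝ) := by simp [dotProduct, hv]
    have hle : v ⬝ᵥ X *ᵥ v ≤ schattenNorm α X hX * (v ⬝ᵥ v) := by
      by_cases htop : α = ⊤
      · rw [schattenNorm, if_pos htop]
        exact quad_form_le_op X v
      · rw [schattenNorm, if_neg htop]
        set r := α.toReal with hr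
        have hr2 : (2:ℝ) ≤ r := by
          rw [hr, ← ENNReal.toReal_ofNat]
          exact ENNReal.toReal_mono htop hα
        have hrpos : 0 < r := by linarith
        refine quad_form_le X hX _ (fun j => ?_) v
        have habs : |hX.eigenvalues j| = (|hX.eigenvalues j| ^ r) ^ ((1:ℝ) / r) := by
          rw [← Real.rpow_mul (abs_nonneg _), mul_one_div_cancel hrpos.ne', Real.rpow_one]
        rw [habs]
        apply Real.rpow_le_rpow (by positivity) ?_ (by positivity)
        exact Finset.single_le_sum (f := fun i => |hX.eigenvalues i| ^ r)
          (fun i _ => by positivity) (Finset.mem_univ j)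
    calc v ⬝ᵥ X *ᵥ v ≤ schattenNorm α X hX * (v ⬝ᵥ v) := hle
      _ ≤ ((N : ℝ) - 1) * q * N := by
          rw [hvv]
          apply mul_le_mul_of_nonneg_right hnorm (Nat.cast_nonneg N)
  -- double sum equals 2 S
  have h2S : v ⬝ᵥ X *ᵥ v = 2 * S := by
    have hexp : v ⬝ᵥ X *ᵥ v = ∑ e : Fin N × Fin N, X e.1 e.2 := by
      rw [Fintype.sum_prod_type]
      simp [dotProduct, Matrix.mulVec, hv]
    rw [hexp, ← Finset.sum_filter_add_sum_filter_not Finset.univ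
      (fun e : Fin N × Fin N => e.1 < e.2) (fun e => X e.1 e.2)]
    have hgt : ∑ e ∈ Finset.univ.filter (fun e : Fin N × Fin N => ¬ e.1 < e.2), X e.1 e.2 = S := by
      rw [← Finset.sum_filter_add_sum_filter_not
        (Finset.univ.filter fun e : Fin N × Fin N => ¬ e.1 < e.2)
        (fun e => e.2 < e.1) (fun e => X e.1 e.2)]
      have hzero : ∑ e ∈ (Finset.univ.filter fun e : Fin N × Fin N => ¬ e.1 < e.2).filter
          (fun e => ¬ e.2 < e.1), X e.1 e.2 = 0 := by
        apply Finset.sum_eq_zero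
        intro e he
        simp only [Finset.mem_filter, Finset.mem_univ, true_and] at he
        have : e.1 = e.2 := le_antisymm (not_lt.1 he.2) (not_lt.1 he.1)
        rw [← this]
        exact hdiag e.1
      rw [hzero, add_zero, hS]
      apply Finset.sum_nbij' (i := fun e : Fin N × Fin N => e.swap)
        (j := fun e : Fin N × Fin N => e.swap)
      · intro e he
        simp only [hs, Finset.mem_filter, Finset.mem_univ, true_and] at he ⊢
        exact he.2
      · intro e he
        simp only [hs, Finset.mem_filter, Finset.mem_univ, true_and] at he ⊢
        exact ⟨not_lt.2 (le_of_lt he), he⟩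
      · intro e _; simp
      · intro e _; simp
      · intro e _
        simp only [Prod.fst_swap, Prod.snd_swap]
        exact (hsym e.1 e.2).symm
    rw [hgt, hS]
    ring
  -- S ≤ (N choose 2) q
  have hSle : S ≤ (N.choose 2 : ℝ) * q := by
    have := hbound
    rw [h2S] at this
    rw [Nat.cast_choose_two]
    nlinarith [this]
  -- decomposition of IpMat
  set c1 := Real.log (q / p) with hc1
  set c2 := Real.log ((1 - q) / (1 - p)) with hc2
  have hsum : IpMat p X = (∑ e ∈ s, Ip q (X e.1 e.2)) + c1 * S + c2 * ((N.choose 2 : ℝ) - S) := by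
    unfold IpMat
    rw [show (Finset.univ.filter (fun q : Fin N × Fin N => q.1 < q.2)) = s from rfl]
    rw [Finset.sum_congr rfl (fun e he => Ip_decomp p q (X e.1 e.2) hp0 hp1 hq0 hq1
      (hX01 e.1 e.2).1 (hX01 e.1 e.2).2)]
    rw [Finset.sum_add_distrib, Finset.sum_add_distrib]
    have e1 : ∑ e ∈ s, X e.1 e.2 * c1 = c1 * S := by
      rw [hS, Finset.mul_sum]
      exact Finset.sum_congr rfl fun e _ => mul_comm _ _
    have e2 : ∑ e ∈ s, (1 - X e.1 e.2) * c2 = c2 * ((N.choose 2 : ℝ) - S) := by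
      rw [← Finset.sum_mul, Finset.sum_sub_distrib, Finset.sum_const, hs, card_pairs, hS]
      simp [mul_comm, hs]
    rw [e1, e2]
  have hT : 0 ≤ ∑ e ∈ s, Ip q (X e.1 e.2) :=
    Finset.sum_nonneg fun e _ => Ip_nonneg q _ hq0 hq1 (hX01 _ _).1 (hX01 _ _).2
  have hIppq : Ip p q = q * c1 + (1 - q) * c2 := by
    have h := Ip_decomp p q q hp0 hp1 hq0 hq1 hq0.le hq1.le
    rw [Ip_self q hq0.ne' hq1.ne] at h
    linarith
  have hc1neg : c1 < 0 := Real.log_neg (div_pos hq0 hp0) ((div_lt_one hp0).2 hqp)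
  have hc2pos : 0 < c2 := Real.log_pos ((one_lt_div (by linarith)).2 (by linarith))
  rw [hsum, hIppq]
  nlinarith [mul_nonneg (sub_nonneg.2 (le_of_lt (lt_trans hc1neg hc2pos)))
    (sub_nonneg.2 hSle)]
end

section
/- Let H = ([n], E) be a simple graph and for an edge e = {v,w} ∈ E let H_{(e)} denote the induced subgraph of H on V \ {v,w}. For symmetric N×N matrices W with entries in [0,1] and Z symmetric, the directional derivative D_H(W,Z) = ⟨Z, ∇hom_H(W)⟩ satisfies |D_H(W,Z)| ≤ N·‖Z‖_op·Σ_{e ∈ E} hom_{H_{(e)}}(W), where hom_H(X) = Σ_{φ: [n]→[N]} Π_{kl ∈ E} X_{φ(k)φ(l)}. -/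
/-- Homomorphism counting function of the induced subgraph `H[s]` of a graph
`H` on `[n]`, evaluated at an N×N matrix `X`:
`hom_{H[s]}(X) = Σ_{φ : s → [N]} Π_{kl ∈ E(H[s])} X_{φ(k)φ(l)}`. -/
noncomputable def homOn {n N : ℕ} (H : SimpleGraph (Fin n)) [DecidableRel H.Adj]
    (s : Finset (Fin n)) (X : Matrix (Fin N) (Fin N) ℝ) : ℝ :=
  ∑ φ : {x // x ∈ s} → Fin N,
    ∏ q ∈ Finset.univ.filter
        (fun q : {x // x ∈ s} × {x // x ∈ s} =>
          (q.1 : Fin n) < (q.2 : Fin n) ∧ H.Adj q.1 q.2),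
      X (φ q.1) (φ q.2)

lemma quad_bound {N : ℕ} (Z : Matrix (Fin N) (Fin N) ℝ) (a b : Fin N → ℝ)
    (ha : ∀ i, a i ∈ Set.Icc (0:ℝ) 1) (hb : ∀ i, b i ∈ Set.Icc (0:ℝ) 1) :
    |∑ i, ∑ j, a i * Z i j * b j| ≤ opNorm Z * N := by
  set T := (Matrix.toEuclideanCLM (𝕜 := ℝ) Z : EuclideanSpace ℝ (Fin N) →L[ℝ] EuclideanSpace ℝ (Fin N))
  set ea : EuclideanSpace ℝ (Fin N) := (WithLp.equiv 2 _).symm a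
  set eb : EuclideanSpace ℝ (Fin N) := (WithLp.equiv 2 _).symm b
  have key : ∑ i, ∑ j, a i * Z i j * b j = inner (𝕜 := ℝ) ea (T eb) := by
    have : T eb = (WithLp.equiv 2 _).symm (Z.mulVec b) :=
      Matrix.toEuclideanCLM_toLp Z b
    rw [this]
    simp only [EuclideanSpace.inner_eq_star_dotProduct]
    simp [dotProduct, Matrix.mulVec, Finset.mul_sum, mul_assoc, ea]
    simp only [Finset.sum_mul]
    exact Finset.sum_congr rfl fun i _ => Finset.sum_congr rfl fun j _ => by ring
  have hnorm : ∀ (c : Fin N → ℝ), (∀ i, c i ∈ Set.Icc (0:ℝ) 1) →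
      ‖(WithLp.equiv 2 (Fin N → ℝ)).symm c‖ ≤ Real.sqrt N := by
    intro c hc
    rw [EuclideanSpace.norm_eq]
    apply Real.sqrt_le_sqrt
    calc ∑ i, ‖c i‖ ^ 2 ≤ ∑ _i : Fin N, (1:ℝ) := by
          apply Finset.sum_le_sum
          intro i _
          have := hc i
          rw [Real.norm_eq_abs, abs_of_nonneg this.1, sq]
          exact mul_le_one₀ this.2 this.1 this.2
      _ = N := by simp
  calc |∑ i, ∑ j, a i * Z i j * b j| = ‖inner (𝕜 := ℝ) ea (T eb)‖ := by rw [key]; rfl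
    _ ≤ ‖ea‖ * ‖T eb‖ := norm_inner_le_norm _ _
    _ ≤ ‖ea‖ * (‖T‖ * ‖eb‖) := by
        gcongr; exact T.le_opNorm eb
    _ ≤ Real.sqrt N * (‖T‖ * Real.sqrt N) := by
        have h1 := hnorm a ha
        have h2 := hnorm b hb
        exact mul_le_mul h1 (mul_le_mul le_rfl h2 (norm_nonneg _) (norm_nonneg _))
          (by positivity) (Real.sqrt_nonneg _)
    _ = ‖T‖ * (Real.sqrt N * Real.sqrt N) := by ring
    _ = opNorm Z * N := by rw [Real.mul_self_sqrt (Nat.cast_nonneg N)]; rfl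

def splitEquiv {n N : ℕ} (u v : Fin n) (hne : u ≠ v) :
    (({x // x ∈ ({u, v}ᶜ : Finset (Fin n))} → Fin N) × Fin N × Fin N) ≃
      ({x // x ∈ (Finset.univ : Finset (Fin n))} → Fin N) where
  toFun p x :=
    if h : x.1 ∈ ({u, v}ᶜ : Finset (Fin n)) then p.1 ⟨x.1, h⟩
    else if x.1 = u then p.2.1 else p.2.2
  invFun φ :=
    (fun y => φ ⟨y.1, Finset.mem_univ _⟩, φ ⟨u, Finset.mem_univ u⟩, φ ⟨v, Finset.mem_univ v⟩)
  left_inv := by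
    rintro ⟨ψ, i, j⟩
    have hu : u ∉ ({u, v}ᶜ : Finset (Fin n)) := by simp
    have hv : v ∉ ({u, v}ᶜ : Finset (Fin n)) := by simp
    simp only [Prod.mk.injEq]
    refine ⟨funext fun y => ?_, ?_, ?_⟩
    · exact dif_pos y.2
    · rw [dif_neg hu]; simp
    · rw [dif_neg hv, if_neg (Ne.symm hne)]
  right_inv := by
    intro φ
    funext x
    dsimp only
    by_cases h : x.1 ∈ ({u, v}ᶜ : Finset (Fin n))
    · rw [dif_pos h]
    · rw [dif_neg h]
      have hx : x.1 = u ∨ x.1 = v := by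
        by_cases h1 : x.1 = u
        · exact Or.inl h1
        · refine Or.inr ?_
          by_contra h2
          exact h (Finset.mem_compl.2 (by simp [h1, h2]))
      rcases hx with hx | hx
      · rw [if_pos hx]; exact congrArg φ (Subtype.ext hx.symm)
      · rw [if_neg (by rw [hx]; exact Ne.symm hne)]
        exact congrArg φ (Subtype.ext hx.symm)

lemma deriv_homOn {n N : ℕ} (H : SimpleGraph (Fin n)) [DecidableRel H.Adj]
    (W Z : Matrix (Fin N) (Fin N) ℝ) :
    deriv (fun t : ℝ => homOn H Finset.univ (W + t • Z)) 0 =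
      ∑ e ∈ Finset.univ.filter
          (fun q : {x // x ∈ (Finset.univ : Finset (Fin n))} ×
              {x // x ∈ (Finset.univ : Finset (Fin n))} =>
            (q.1 : Fin n) < (q.2 : Fin n) ∧ H.Adj q.1 q.2),
        ∑ φ : {x // x ∈ (Finset.univ : Finset (Fin n))} → Fin N,
          (∏ q ∈ (Finset.univ.filter
              (fun q : {x // x ∈ (Finset.univ : Finset (Fin n))} ×
                  {x // x ∈ (Finset.univ : Finset (Fin n))} =>
                (q.1 : Fin n) < (q.2 : Fin n) ∧ H.Adj q.1 q.2)).erase e,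
            W (φ q.1) (φ q.2)) * Z (φ e.1) (φ e.2) := by
  classical
  set Eset := Finset.univ.filter
      (fun q : {x // x ∈ (Finset.univ : Finset (Fin n))} ×
          {x // x ∈ (Finset.univ : Finset (Fin n))} =>
        (q.1 : Fin n) < (q.2 : Fin n) ∧ H.Adj q.1 q.2) with hEset
  have key : ∀ φ : {x // x ∈ (Finset.univ : Finset (Fin n))} → Fin N,
      HasDerivAt (fun t : ℝ => ∏ q ∈ Eset, (W + t • Z) (φ q.1) (φ q.2))
        (∑ e ∈ Eset, (∏ q ∈ Eset.erase e, W (φ q.1) (φ q.2)) * Z (φ e.1) (φ e.2)) 0 := by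
    intro φ
    have h := HasDerivAt.fun_finsetProd (u := Eset) (x := (0:ℝ))
      (f := fun q t => (W + t • Z) (φ q.1) (φ q.2)) (f' := fun q => Z (φ q.1) (φ q.2)) ?_
    · simpa [Matrix.add_apply, Matrix.smul_apply] using h
    · intro q hq
      have h1 : HasDerivAt (fun t : ℝ => W (φ q.1) (φ q.2) + t * Z (φ q.1) (φ q.2))
          (Z (φ q.1) (φ q.2)) 0 := by
        simpa using ((hasDerivAt_id (0:ℝ)).mul_const (Z (φ q.1) (φ q.2))).const_add
          (W (φ q.1) (φ q.2))
      simpa [Matrix.add_apply, Matrix.smul_apply] using h1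
  have h2 : HasDerivAt (fun t : ℝ => homOn H Finset.univ (W + t • Z))
      (∑ φ : {x // x ∈ (Finset.univ : Finset (Fin n))} → Fin N,
        ∑ e ∈ Eset, (∏ q ∈ Eset.erase e, W (φ q.1) (φ q.2)) * Z (φ e.1) (φ e.2)) 0 := by
    have h3 := HasDerivAt.fun_sum
      (u := (Finset.univ : Finset ({x // x ∈ (Finset.univ : Finset (Fin n))} → Fin N)))
      (fun φ _ => key φ)
    simpa [homOn, hEset] using h3
  rw [h2.deriv, Finset.sum_comm]

lemma edge_bound {n N : ℕ} (H : SimpleGraph (Fin n)) [DecidableRel H.Adj]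
    (W Z : Matrix (Fin N) (Fin N) ℝ) (hW01 : ∀ i j, W i j ∈ Set.Icc (0:ℝ) 1)
    (u v : Fin n) (hlt : u < v) (hadj : H.Adj u v) :
    |∑ φ : {x // x ∈ (Finset.univ : Finset (Fin n))} → Fin N,
        (∏ q ∈ (Finset.univ.filter
            (fun q : {x // x ∈ (Finset.univ : Finset (Fin n))} ×
                {x // x ∈ (Finset.univ : Finset (Fin n))} =>
              (q.1 : Fin n) < (q.2 : Fin n) ∧ H.Adj q.1 q.2)).erase
            (⟨u, Finset.mem_univ u⟩, ⟨v, Finset.mem_univ v⟩),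
          W (φ q.1) (φ q.2)) *
        Z (φ ⟨u, Finset.mem_univ u⟩) (φ ⟨v, Finset.mem_univ v⟩)|
      ≤ (N : ℝ) * opNorm Z * homOn H ({u, v}ᶜ) W := by
  classical
  have hne : u ≠ v := ne_of_lt hlt
  set c : Finset (Fin n) := {u, v}ᶜ with hc
  have hu_nc : u ∉ c := by simp [hc]
  have hv_nc : v ∉ c := by simp [hc]
  have mem_c : ∀ x : Fin n, x ≠ u → x ≠ v → x ∈ c := by
    intro x h1 h2; rw [hc]; simp [h1, h2]
  rcases Nat.eq_zero_or_pos N with hN | hN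
  · subst hN
    haveI : Nonempty {x // x ∈ (Finset.univ : Finset (Fin n))} := ⟨⟨u, Finset.mem_univ u⟩⟩
    haveI : IsEmpty ({x // x ∈ (Finset.univ : Finset (Fin n))} → Fin 0) :=
      ⟨fun f => (f ⟨u, Finset.mem_univ u⟩).elim0⟩
    rw [Finset.univ_eq_empty (α := {x // x ∈ (Finset.univ : Finset (Fin n))} → Fin 0),
      Finset.sum_empty]
    simp
  -- nontrivial case
  set V := {x // x ∈ (Finset.univ : Finset (Fin n))} with hV
  set Ψ := ({x // x ∈ c} → Fin N) with hΨ
  set d : Fin N := ⟨0, hN⟩ with hd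
  set u₀ : V := ⟨u, Finset.mem_univ u⟩ with hu₀
  set v₀ : V := ⟨v, Finset.mem_univ v⟩ with hv₀
  set Eset : Finset (V × V) := Finset.univ.filter
      (fun q : V × V => (q.1 : Fin n) < (q.2 : Fin n) ∧ H.Adj q.1 q.2) with hEs
  set Er : Finset (V × V) := Eset.erase (u₀, v₀) with hEr
  set Su : Finset (V × V) := Er.filter (fun q => (q.1 : Fin n) = u ∨ (q.2 : Fin n) = u) with hSu
  set S2 : Finset (V × V) := Er.filter (fun q => ¬((q.1 : Fin n) = u ∨ (q.2 : Fin n) = u)) with hS2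
  set Sv : Finset (V × V) := S2.filter (fun q => (q.1 : Fin n) = v ∨ (q.2 : Fin n) = v) with hSv
  set So : Finset (V × V) := S2.filter (fun q => ¬((q.1 : Fin n) = v ∨ (q.2 : Fin n) = v)) with hSo
  set g : Ψ → Fin N → V → Fin N :=
    fun ψ k x => if h : (x : Fin n) ∈ c then ψ ⟨x.1, h⟩ else k with hg
  have hgc : ∀ ψ k (x : V) (h : (x : Fin n) ∈ c), g ψ k x = ψ ⟨x.1, h⟩ := by
    intro ψ k x h; rw [hg]; exact dif_pos h
  have hgn : ∀ ψ k (x : V), (x : Fin n) ∉ c → g ψ k x = k := by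
    intro ψ k x h; rw [hg]; exact dif_neg h
  set E := splitEquiv (N := N) u v hne with hE
  have hEc : ∀ (p : Ψ × Fin N × Fin N) (x : V) (h : (x : Fin n) ∈ c),
      E p x = p.1 ⟨x.1, h⟩ := by
    intro p x h; rw [hE]; simp only [splitEquiv, Equiv.coe_fn_mk]; rw [dif_pos h]
  have hEu : ∀ (p : Ψ × Fin N × Fin N) (x : V), (x : Fin n) = u → E p x = p.2.1 := by
    intro p x h; rw [hE]; simp only [splitEquiv, Equiv.coe_fn_mk]
    rw [dif_neg (by rw [h]; exact hu_nc), if_pos h]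
  have hEv : ∀ (p : Ψ × Fin N × Fin N) (x : V), (x : Fin n) = v → E p x = p.2.2 := by
    intro p x h; rw [hE]; simp only [splitEquiv, Equiv.coe_fn_mk]
    rw [dif_neg (by rw [h]; exact hv_nc), if_neg (by rw [h]; exact Ne.symm hne)]
  -- endpoint classification
  have hmemEr : ∀ q ∈ Er, ((q.1 : Fin n) < (q.2 : Fin n) ∧ H.Adj q.1 q.2) ∧ q ≠ (u₀, v₀) := by
    intro q hq
    rw [hEr] at hq
    obtain ⟨hne', hq'⟩ := Finset.mem_erase.1 hq
    rw [hEs] at hq'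
    exact ⟨(Finset.mem_filter.1 hq').2, hne'⟩
  have hSu_cl : ∀ q ∈ Su, ((q.1 : Fin n) ∈ c ∨ (q.1 : Fin n) = u) ∧
      ((q.2 : Fin n) ∈ c ∨ (q.2 : Fin n) = u) := by
    intro q hq
    rw [hSu] at hq
    obtain ⟨hq1, htouch⟩ := Finset.mem_filter.1 hq
    obtain ⟨⟨hlt', hadj'⟩, hne'⟩ := hmemEr q hq1
    rcases htouch with h1 | h2
    · refine ⟨Or.inr h1, Or.inl ?_⟩
      have h2u : (q.2 : Fin n) ≠ u := by
        intro h; rw [h1, h] at hlt'; exact lt_irrefl _ hlt'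
      have h2v : (q.2 : Fin n) ≠ v := by
        intro h
        exact hne' (Prod.ext (Subtype.ext h1) (Subtype.ext h))
      exact mem_c _ h2u h2v
    · refine ⟨Or.inl ?_, Or.inr h2⟩
      have h1u : (q.1 : Fin n) ≠ u := by
        intro h; rw [h, h2] at hlt'; exact lt_irrefl _ hlt'
      have h1v : (q.1 : Fin n) ≠ v := by
        intro h; rw [h, h2] at hlt'; exact absurd (hlt'.trans hlt) (lt_irrefl _)
      exact mem_c _ h1u h1v
  have hSv_cl : ∀ q ∈ Sv, ((q.1 : Fin n) ∈ c ∨ (q.1 : Fin n) = v) ∧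
      ((q.2 : Fin n) ∈ c ∨ (q.2 : Fin n) = v) := by
    intro q hq
    rw [hSv] at hq
    obtain ⟨hq1, htouch⟩ := Finset.mem_filter.1 hq
    rw [hS2] at hq1
    obtain ⟨hq2, hnu⟩ := Finset.mem_filter.1 hq1
    push_neg at hnu
    obtain ⟨⟨hlt', hadj'⟩, hne'⟩ := hmemEr q hq2
    rcases htouch with h1 | h2
    · refine ⟨Or.inr h1, Or.inl ?_⟩
      have h2v : (q.2 : Fin n) ≠ v := by
        intro h; rw [h1, h] at hlt'; exact lt_irrefl _ hlt'
      exact mem_c _ hnu.2 h2v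
    · refine ⟨Or.inl ?_, Or.inr h2⟩
      have h1v : (q.1 : Fin n) ≠ v := by
        intro h; rw [h, h2] at hlt'; exact lt_irrefl _ hlt'
      exact mem_c _ hnu.1 h1v
  have hSo_cl : ∀ q ∈ So, ((q.1 : Fin n) ∈ c) ∧ ((q.2 : Fin n) ∈ c) := by
    intro q hq
    rw [hSo] at hq
    obtain ⟨hq1, hnv⟩ := Finset.mem_filter.1 hq
    rw [hS2] at hq1
    obtain ⟨hq2, hnu⟩ := Finset.mem_filter.1 hq1
    push_neg at hnu; push_neg at hnv
    exact ⟨mem_c _ hnu.1 hnv.1, mem_c _ hnu.2 hnv.2⟩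
  -- pointwise equalities E vs g
  have hpt_u : ∀ (ψ : Ψ) (i j : Fin N) (x : V), ((x : Fin n) ∈ c ∨ (x : Fin n) = u) →
      E (ψ, i, j) x = g ψ i x := by
    rintro ψ i j x (h | h)
    · rw [hEc _ _ h, hgc _ _ _ h]
    · rw [hEu _ _ h, hgn _ _ _ (by rw [h]; exact hu_nc)]
  have hpt_v : ∀ (ψ : Ψ) (i j : Fin N) (x : V), ((x : Fin n) ∈ c ∨ (x : Fin n) = v) →
      E (ψ, i, j) x = g ψ j x := by
    rintro ψ i j x (h | h)
    · rw [hEc _ _ h, hgc _ _ _ h]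
    · rw [hEv _ _ h, hgn _ _ _ (by rw [h]; exact hv_nc)]
  have hpt_c : ∀ (ψ : Ψ) (i j k : Fin N) (x : V), (x : Fin n) ∈ c →
      E (ψ, i, j) x = g ψ k x := by
    intro ψ i j k x h
    rw [hEc _ _ h, hgc _ _ _ h]
  -- the a, b, C functions
  set af : Ψ → Fin N → ℝ := fun ψ i => ∏ q ∈ Su, W (g ψ i q.1) (g ψ i q.2) with haf
  set bf : Ψ → Fin N → ℝ := fun ψ j => ∏ q ∈ Sv, W (g ψ j q.1) (g ψ j q.2) with hbf
  set Cf : Ψ → ℝ := fun ψ => ∏ q ∈ So, W (g ψ d q.1) (g ψ d q.2) with hCf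
  have hIcc : ∀ (s : Finset (V × V)) (f : V → Fin N),
      (∏ q ∈ s, W (f q.1) (f q.2)) ∈ Set.Icc (0:ℝ) 1 := by
    intro s f
    constructor
    · exact Finset.prod_nonneg fun q _ => (hW01 _ _).1
    · exact Finset.prod_le_one (fun q _ => (hW01 _ _).1) (fun q _ => (hW01 _ _).2)
  -- the product splits
  have hprod : ∀ (ψ : Ψ) (i j : Fin N),
      (∏ q ∈ Er, W (E (ψ, i, j) q.1) (E (ψ, i, j) q.2)) = af ψ i * (bf ψ j * Cf ψ) := by
    intro ψ i j
    rw [← Finset.prod_filter_mul_prod_filter_not Er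
      (fun q => (q.1 : Fin n) = u ∨ (q.2 : Fin n) = u), ← hSu, ← hS2,
      ← Finset.prod_filter_mul_prod_filter_not S2
      (fun q => (q.1 : Fin n) = v ∨ (q.2 : Fin n) = v), ← hSv, ← hSo]
    congr 1
    · rw [haf]
      refine Finset.prod_congr rfl fun q hq => ?_
      obtain ⟨h1, h2⟩ := hSu_cl q hq
      rw [hpt_u ψ i j _ h1, hpt_u ψ i j _ h2]
    congr 1
    · rw [hbf]
      refine Finset.prod_congr rfl fun q hq => ?_
      obtain ⟨h1, h2⟩ := hSv_cl q hq
      rw [hpt_v ψ i j _ h1, hpt_v ψ i j _ h2]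
    · rw [hCf]
      refine Finset.prod_congr rfl fun q hq => ?_
      obtain ⟨h1, h2⟩ := hSo_cl q hq
      rw [hpt_c ψ i j d _ h1, hpt_c ψ i j d _ h2]
  -- rewrite the sum via the equivalence
  have hsum : ∑ φ : V → Fin N,
      (∏ q ∈ Er, W (φ q.1) (φ q.2)) * Z (φ u₀) (φ v₀) =
      ∑ ψ : Ψ, Cf ψ * ∑ i, ∑ j, af ψ i * Z i j * bf ψ j := by
    rw [← Fintype.sum_equiv E
      (fun p => (∏ q ∈ Er, W (E p q.1) (E p q.2)) * Z (E p u₀) (E p v₀))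
      (fun φ => (∏ q ∈ Er, W (φ q.1) (φ q.2)) * Z (φ u₀) (φ v₀)) (fun p => rfl)]
    rw [Fintype.sum_prod_type]
    refine Finset.sum_congr rfl fun ψ _ => ?_
    rw [Fintype.sum_prod_type]
    rw [Finset.mul_sum]
    refine Finset.sum_congr rfl fun i _ => ?_
    rw [Finset.mul_sum]
    refine Finset.sum_congr rfl fun j _ => ?_
    rw [hprod ψ i j, hEu (ψ, i, j) u₀ rfl, hEv (ψ, i, j) v₀ rfl]
    ring
  -- identify ∑ Cf with homOn
  have hhom : ∑ ψ : Ψ, Cf ψ = homOn H c W := by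
    rw [homOn]
    refine Finset.sum_congr rfl fun ψ _ => ?_
    rw [hCf]
    refine Finset.prod_bij' (i := fun q hq => ((⟨(q.1 : Fin n), (hSo_cl q hq).1⟩ : {x // x ∈ c}),
        (⟨(q.2 : Fin n), (hSo_cl q hq).2⟩ : {x // x ∈ c})))
      (j := fun q' _ => ((⟨(q'.1 : Fin n), Finset.mem_univ _⟩ : V),
        (⟨(q'.2 : Fin n), Finset.mem_univ _⟩ : V))) ?_ ?_ ?_ ?_ ?_
    · intro q hq
      obtain ⟨hq1, _⟩ := Finset.mem_filter.1 (hSo ▸ hq)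
      obtain ⟨hq2, _⟩ := Finset.mem_filter.1 (hS2 ▸ hq1)
      obtain ⟨⟨hlt', hadj'⟩, _⟩ := hmemEr q hq2
      exact Finset.mem_filter.2 ⟨Finset.mem_univ _, hlt', hadj'⟩
    · intro q' hq'
      obtain ⟨_, hlt', hadj'⟩ := Finset.mem_filter.1 hq'
      have h1c : ((q'.1 : Fin n) : Fin n) ∈ c := q'.1.2
      have h2c : ((q'.2 : Fin n) : Fin n) ∈ c := q'.2.2
      rw [hSo]
      refine Finset.mem_filter.2 ⟨?_, ?_⟩
      · rw [hS2]
        refine Finset.mem_filter.2 ⟨?_, ?_⟩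
        · rw [hEr]
          refine Finset.mem_erase.2 ⟨?_, ?_⟩
          · intro h
            have : ((q'.1 : Fin n) : Fin n) = u := by
              have := congrArg (fun p => ((p.1 : V) : Fin n)) h
              simpa [hu₀] using this
            exact hu_nc (this ▸ h1c)
          · rw [hEs]
            exact Finset.mem_filter.2 ⟨Finset.mem_univ _, hlt', hadj'⟩
        · push_neg
          exact ⟨fun h => hu_nc (h ▸ h1c), fun h => hu_nc (h ▸ h2c)⟩
      · push_neg
        exact ⟨fun h => hv_nc (h ▸ h1c), fun h => hv_nc (h ▸ h2c)⟩
    · intro q hq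
      rfl
    · intro q' hq'
      rfl
    · intro q hq
      obtain ⟨h1, h2⟩ := hSo_cl q hq
      rw [hgc _ _ _ h1, hgc _ _ _ h2]
  -- final estimate
  rw [hsum]
  calc |∑ ψ : Ψ, Cf ψ * ∑ i, ∑ j, af ψ i * Z i j * bf ψ j|
      ≤ ∑ ψ : Ψ, |Cf ψ * ∑ i, ∑ j, af ψ i * Z i j * bf ψ j| :=
        Finset.abs_sum_le_sum_abs _ _
    _ ≤ ∑ ψ : Ψ, Cf ψ * (opNorm Z * N) := by
        refine Finset.sum_le_sum fun ψ _ => ?_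
        rw [abs_mul]
        have hC0 : (0:ℝ) ≤ Cf ψ := (hIcc So _).1
        rw [abs_of_nonneg hC0]
        exact mul_le_mul_of_nonneg_left
          (quad_bound Z (af ψ) (bf ψ) (fun i => hIcc Su _) (fun j => hIcc Sv _)) hC0
    _ = (∑ ψ : Ψ, Cf ψ) * (opNorm Z * N) := by rw [← Finset.sum_mul]
    _ = (N : ℝ) * opNorm Z * homOn H c W := by rw [hhom]; ring

/-- the directional derivative of `hom_H` at a symmetric `W` with
entries in `[0,1]`, in a symmetric direction `Z`, is bounded by
`N·‖Z‖_op·Σ_{e ∈ E(H)} hom_{H_{(e)}}(W)`, where `H_{(e)}` is the induced subgraph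
on the vertices away from the endpoints of `e`. -/
theorem directional_derivative_hom_le {n N : ℕ}
    (H : SimpleGraph (Fin n)) [DecidableRel H.Adj]
    (W Z : Matrix (Fin N) (Fin N) ℝ) (hW : W.IsSymm) (hZ : Z.IsSymm)
    (hW01 : ∀ i j, W i j ∈ Set.Icc (0:ℝ) 1) :
    |deriv (fun t : ℝ => homOn H Finset.univ (W + t • Z)) 0| ≤
      (N : ℝ) * opNorm Z *
        ∑ e ∈ Finset.univ.filter
            (fun e : Fin n × Fin n => e.1 < e.2 ∧ H.Adj e.1 e.2),
          homOn H ({e.1, e.2}ᶜ) W := by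
  classical
  rw [deriv_homOn H W Z]
  set Eset := Finset.univ.filter
      (fun q : {x // x ∈ (Finset.univ : Finset (Fin n))} ×
          {x // x ∈ (Finset.univ : Finset (Fin n))} =>
        (q.1 : Fin n) < (q.2 : Fin n) ∧ H.Adj q.1 q.2) with hEs
  calc |∑ e ∈ Eset, ∑ φ : {x // x ∈ (Finset.univ : Finset (Fin n))} → Fin N,
          (∏ q ∈ Eset.erase e, W (φ q.1) (φ q.2)) * Z (φ e.1) (φ e.2)|
      ≤ ∑ e ∈ Eset, |∑ φ : {x // x ∈ (Finset.univ : Finset (Fin n))} → Fin N,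
          (∏ q ∈ Eset.erase e, W (φ q.1) (φ q.2)) * Z (φ e.1) (φ e.2)| :=
        Finset.abs_sum_le_sum_abs _ _
    _ ≤ ∑ e ∈ Eset, (N : ℝ) * opNorm Z * homOn H ({(e.1 : Fin n), (e.2 : Fin n)}ᶜ) W := by
        refine Finset.sum_le_sum fun e he => ?_
        obtain ⟨-, hlt, hadj⟩ := Finset.mem_filter.1 (hEs ▸ he)
        exact edge_bound H W Z hW01 (e.1 : Fin n) (e.2 : Fin n) hlt hadj
    _ = (N : ℝ) * opNorm Z *
          ∑ e ∈ Finset.univ.filter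
              (fun e : Fin n × Fin n => e.1 < e.2 ∧ H.Adj e.1 e.2),
            homOn H ({e.1, e.2}ᶜ) W := by
        rw [← Finset.mul_sum]
        congr 1
        refine Finset.sum_bij' (i := fun q _ => ((q.1 : Fin n), (q.2 : Fin n)))
          (j := fun e _ => ((⟨e.1, Finset.mem_univ _⟩ : {x // x ∈ (Finset.univ : Finset (Fin n))}),
            (⟨e.2, Finset.mem_univ _⟩ : {x // x ∈ (Finset.univ : Finset (Fin n))})))
          ?_ ?_ ?_ ?_ ?_
        · intro q hq
          obtain ⟨-, hlt, hadj⟩ := Finset.mem_filter.1 (hEs ▸ hq)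
          exact Finset.mem_filter.2 ⟨Finset.mem_univ _, hlt, hadj⟩
        · intro e he
          obtain ⟨-, hlt, hadj⟩ := Finset.mem_filter.1 he
          rw [hEs]
          exact Finset.mem_filter.2 ⟨Finset.mem_univ _, hlt, hadj⟩
        · intro q hq; rfl
        · intro e he; rfl
        · intro q hq; rfl
end

section
/- For any real α > 0 and symmetric N×N matrices M_1, M_2, the Schatten norms satisfy |‖M_1‖_{S_α}^α − ‖M_2‖_{S_α}^α| ≤ α·‖M_1 − M_2‖_op·(‖M_1‖_{S_{α−1}}^{α−1} + ‖M_2‖_{S_{α−1}}^{α−1}) for α ≥ 1, using the ordering of eigenvalues on ℝ and Weyl's inequality. -/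
open Matrix Finset Module Submodule
open scoped RealInnerProductSpace

variable {N : ℕ}

lemma clm_apply_eigen (M : Matrix (Fin N) (Fin N) ℝ) (h : M.IsHermitian) (i : Fin N) :
    Matrix.toEuclideanCLM (𝕜 := ℝ) M (h.eigenvectorBasis i) = h.eigenvalues i • h.eigenvectorBasis i := by
  have hm := h.mulVec_eigenvectorBasis i
  have h2 := Matrix.ofLp_toEuclideanCLM (𝕜 := ℝ) M (h.eigenvectorBasis i)
  apply (WithLp.equiv 2 (Fin N → ℝ)).injective
  exact h2.trans hm

lemma repr_eq_zero_of_not_mem (M : Matrix (Fin N) (Fin N) ℝ) (h : M.IsHermitian)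
    (S : Finset (Fin N)) (x : EuclideanSpace ℝ (Fin N))
    (hx : x ∈ span ℝ (h.eigenvectorBasis '' S)) {i : Fin N} (hi : i ∉ S) :
    ⟪h.eigenvectorBasis i, x⟫ = 0 := by
  have hle : span ℝ (h.eigenvectorBasis '' S) ≤
      LinearMap.ker (innerSL ℝ (h.eigenvectorBasis i) : _ →L[ℝ] ℝ).toLinearMap := by
    rw [span_le]
    rintro _ ⟨j, hj, rfl⟩
    have : i ≠ j := fun hij => hi (hij ▸ hj)
    simpa using h.eigenvectorBasis.orthonormal.2 this
  simpa using hle hx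

lemma inner_clm_eq_sum (M : Matrix (Fin N) (Fin N) ℝ) (h : M.IsHermitian)
    (x : EuclideanSpace ℝ (Fin N)) :
    ⟪Matrix.toEuclideanCLM (𝕜 := ℝ) M x, x⟫ =
      ∑ i, h.eigenvalues i * (h.eigenvectorBasis.repr x i)^2 := by
  set b := h.eigenvectorBasis
  conv_lhs => rw [← b.sum_repr x]
  rw [map_sum]
  have : ∀ i : Fin N, Matrix.toEuclideanCLM (𝕜 := ℝ) M (b.repr x i • b i)
      = (h.eigenvalues i * b.repr x i) • b i := by
    intro i
    rw [_root_.map_smul, clm_apply_eigen M h i, smul_smul, mul_comm]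
  simp_rw [this]
  rw [b.orthonormal.inner_sum]
  apply Finset.sum_congr rfl
  intro i _
  simp [sq]
  ring

lemma norm_sq_eq_sum_repr (b : OrthonormalBasis (Fin N) ℝ (EuclideanSpace ℝ (Fin N)))
    (x : EuclideanSpace ℝ (Fin N)) : ‖x‖^2 = ∑ i, (b.repr x i)^2 := by
  have h1 : ‖x‖ = ‖b.repr x‖ := (b.repr.norm_map x).symm
  rw [h1, EuclideanSpace.norm_eq, Real.sq_sqrt (by positivity)]
  simp [sq_abs]

lemma rayleigh_ge (M : Matrix (Fin N) (Fin N) ℝ) (h : M.IsHermitian)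
    (S : Finset (Fin N)) (c : ℝ) (hc : ∀ i ∈ S, c ≤ h.eigenvalues i)
    (x : EuclideanSpace ℝ (Fin N)) (hx : x ∈ span ℝ (h.eigenvectorBasis '' S)) :
    c * ‖x‖^2 ≤ ⟪Matrix.toEuclideanCLM (𝕜 := ℝ) M x, x⟫ := by
  rw [inner_clm_eq_sum M h x, norm_sq_eq_sum_repr h.eigenvectorBasis x, Finset.mul_sum]
  apply Finset.sum_le_sum
  intro i _
  by_cases hi : i ∈ S
  · exact mul_le_mul_of_nonneg_right (hc i hi) (sq_nonneg _)
  · have : h.eigenvectorBasis.repr x i = 0 := by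
      rw [h.eigenvectorBasis.repr_apply_apply]
      exact repr_eq_zero_of_not_mem M h S x hx hi
    simp [this]

lemma rayleigh_le (M : Matrix (Fin N) (Fin N) ℝ) (h : M.IsHermitian)
    (S : Finset (Fin N)) (c : ℝ) (hc : ∀ i ∈ S, h.eigenvalues i ≤ c)
    (x : EuclideanSpace ℝ (Fin N)) (hx : x ∈ span ℝ (h.eigenvectorBasis '' S)) :
    ⟪Matrix.toEuclideanCLM (𝕜 := ℝ) M x, x⟫ ≤ c * ‖x‖^2 := by
  rw [inner_clm_eq_sum M h x, norm_sq_eq_sum_repr h.eigenvectorBasis x, Finset.mul_sum]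
  apply Finset.sum_le_sum
  intro i _
  by_cases hi : i ∈ S
  · exact mul_le_mul_of_nonneg_right (hc i hi) (sq_nonneg _)
  · have : h.eigenvectorBasis.repr x i = 0 := by
      rw [h.eigenvectorBasis.repr_apply_apply]
      exact repr_eq_zero_of_not_mem M h S x hx hi
    simp [this]


lemma finrank_span_basis_image (b : OrthonormalBasis (Fin N) ℝ (EuclideanSpace ℝ (Fin N)))
    (S : Finset (Fin N)) :
    finrank ℝ (span ℝ (b '' S) : Submodule ℝ (EuclideanSpace ℝ (Fin N))) = S.card := by
  have hli : LinearIndependent ℝ (fun i : S => b i) :=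
    b.orthonormal.linearIndependent.comp _ Subtype.val_injective
  have himg : (b '' (S : Set (Fin N))) = Set.range (fun i : S => b i) :=
    Set.image_eq_range _ _
  rw [himg, finrank_span_eq_card hli, Fintype.card_coe]

lemma inner_sub_le (M : Matrix (Fin N) (Fin N) ℝ) (x : EuclideanSpace ℝ (Fin N)) :
    ⟪Matrix.toEuclideanCLM (𝕜 := ℝ) M x, x⟫ ≤ opNorm M * ‖x‖^2 := by
  calc ⟪Matrix.toEuclideanCLM (𝕜 := ℝ) M x, x⟫
      ≤ ‖Matrix.toEuclideanCLM (𝕜 := ℝ) M x‖ * ‖x‖ := real_inner_le_norm _ _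
    _ ≤ (opNorm M * ‖x‖) * ‖x‖ :=
        mul_le_mul_of_nonneg_right ((Matrix.toEuclideanCLM (𝕜 := ℝ) M).le_opNorm x) (norm_nonneg _)
    _ = opNorm M * ‖x‖^2 := by ring

/-- One-sided Weyl: sorted eigenvalue difference bound. -/
lemma weyl_one_sided (M₁ M₂ : Matrix (Fin N) (Fin N) ℝ)
    (h₁ : M₁.IsHermitian) (h₂ : M₂.IsHermitian) (j : Fin N) :
    h₁.eigenvalues (Tuple.sort h₁.eigenvalues j) - h₂.eigenvalues (Tuple.sort h₂.eigenvalues j)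
      ≤ opNorm (M₁ - M₂) := by
  classical
  set σ₁ := Tuple.sort h₁.eigenvalues
  set σ₂ := Tuple.sort h₂.eigenvalues
  set a : Fin N → ℝ := h₁.eigenvalues ∘ σ₁ with ha
  set b : Fin N → ℝ := h₂.eigenvalues ∘ σ₂ with hb
  have hmono₁ : Monotone a := Tuple.monotone_sort h₁.eigenvalues
  have hmono₂ : Monotone b := Tuple.monotone_sort h₂.eigenvalues
  -- subspaces
  set V : Submodule ℝ (EuclideanSpace ℝ (Fin N)) :=
    span ℝ (h₁.eigenvectorBasis '' ((Finset.Ici j).image σ₁)) with hV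
  set W : Submodule ℝ (EuclideanSpace ℝ (Fin N)) :=
    span ℝ (h₂.eigenvectorBasis '' ((Finset.Iic j).image σ₂)) with hW
  have hdimV : finrank ℝ V = N - (j : ℕ) := by
    rw [hV, finrank_span_basis_image, Finset.card_image_of_injective _ σ₁.injective, Fin.card_Ici]
  have hdimW : finrank ℝ W = (j : ℕ) + 1 := by
    rw [hW, finrank_span_basis_image, Finset.card_image_of_injective _ σ₂.injective, Fin.card_Iic]
  have hne : V ⊓ W ≠ ⊥ := by
    intro hbot
    have hsum := Submodule.finrank_sup_add_finrank_inf_eq V W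
    rw [hbot, finrank_bot, add_zero, hdimV, hdimW] at hsum
    have hle : finrank ℝ (V ⊔ W : Submodule ℝ (EuclideanSpace ℝ (Fin N))) ≤ N := by
      have := Submodule.finrank_le (V ⊔ W)
      rwa [finrank_euclideanSpace_fin] at this
    have hjN : (j : ℕ) < N := j.isLt
    omega
  obtain ⟨x, hxVW, hx0⟩ := Submodule.exists_mem_ne_zero_of_ne_bot hne
  have hxV : x ∈ V := hxVW.1
  have hxW : x ∈ W := hxVW.2
  have hray₁ : a j * ‖x‖^2 ≤ ⟪Matrix.toEuclideanCLM (𝕜 := ℝ) M₁ x, x⟫ := by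
    apply rayleigh_ge M₁ h₁ _ _ _ x hxV
    intro i hi
    simp only [Finset.mem_image, Finset.mem_Ici] at hi
    obtain ⟨k, hk, rfl⟩ := hi
    exact hmono₁ hk
  have hray₂ : ⟪Matrix.toEuclideanCLM (𝕜 := ℝ) M₂ x, x⟫ ≤ b j * ‖x‖^2 := by
    apply rayleigh_le M₂ h₂ _ _ _ x hxW
    intro i hi
    simp only [Finset.mem_image, Finset.mem_Iic] at hi
    obtain ⟨k, hk, rfl⟩ := hi
    exact hmono₂ hk
  have hdiff : ⟪Matrix.toEuclideanCLM (𝕜 := ℝ) M₁ x, x⟫ - ⟪Matrix.toEuclideanCLM (𝕜 := ℝ) M₂ x, x⟫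
      ≤ opNorm (M₁ - M₂) * ‖x‖^2 := by
    have := inner_sub_le (M₁ - M₂) x
    rwa [map_sub, ContinuousLinearMap.sub_apply, inner_sub_left] at this
  have hnx : (0:ℝ) < ‖x‖ := norm_pos_iff.mpr hx0
  have hxpos : (0:ℝ) < ‖x‖^2 := by positivity
  show a j - b j ≤ opNorm (M₁ - M₂)
  nlinarith [hray₁, hray₂, hdiff]

lemma opNorm_sub_symm (M₁ M₂ : Matrix (Fin N) (Fin N) ℝ) :
    opNorm (M₂ - M₁) = opNorm (M₁ - M₂) := by
  unfold opNorm
  rw [show M₂ - M₁ = -(M₁ - M₂) from (neg_sub M₁ M₂).symm, map_neg, norm_neg]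

lemma weyl (M₁ M₂ : Matrix (Fin N) (Fin N) ℝ)
    (h₁ : M₁.IsHermitian) (h₂ : M₂.IsHermitian) (j : Fin N) :
    |h₁.eigenvalues (Tuple.sort h₁.eigenvalues j) - h₂.eigenvalues (Tuple.sort h₂.eigenvalues j)|
      ≤ opNorm (M₁ - M₂) := by
  rw [abs_sub_le_iff]
  refine ⟨weyl_one_sided M₁ M₂ h₁ h₂ j, ?_⟩
  have := weyl_one_sided M₂ M₁ h₂ h₁ j
  rwa [opNorm_sub_symm] at this

/-- MVT bound for rpow. -/
lemma rpow_sub_rpow_le {α : ℝ} (hα : 1 ≤ α) {x y : ℝ} (hx : 0 ≤ x) (hy : 0 ≤ y) :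
    |x ^ α - y ^ α| ≤ α * |x - y| * (x ^ (α - 1) + y ^ (α - 1)) := by
  wlog hxy : y ≤ x generalizing x y
  · have := this hy hx (le_of_not_ge hxy)
    rw [abs_sub_comm y x, add_comm (y ^ (α - 1)), abs_sub_comm (y ^ α)] at this
    exact this
  -- MVT on [y, x]
  have hderiv : ∀ t ∈ Set.Icc y x, HasDerivWithinAt (fun s : ℝ => s ^ α)
      (α * t ^ (α - 1)) (Set.Icc y x) t := fun t _ =>
    (Real.hasDerivAt_rpow_const (Or.inr hα)).hasDerivWithinAt
  have hbound : ∀ t ∈ Set.Icc y x, ‖α * t ^ (α - 1)‖ ≤ α * x ^ (α - 1) := by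
    intro t ht
    have ht0 : 0 ≤ t := le_trans hy ht.1
    have h1 : t ^ (α - 1) ≤ x ^ (α - 1) :=
      Real.rpow_le_rpow ht0 ht.2 (by linarith)
    have h2 : (0:ℝ) ≤ t ^ (α - 1) := Real.rpow_nonneg ht0 _
    rw [Real.norm_eq_abs, abs_mul, abs_of_nonneg (by linarith : (0:ℝ) ≤ α), abs_of_nonneg h2]
    exact mul_le_mul_of_nonneg_left h1 (by linarith)
  have hmvt := Convex.norm_image_sub_le_of_norm_hasDerivWithin_le hderiv hbound
    (convex_Icc y x) (Set.left_mem_Icc.mpr hxy) (Set.right_mem_Icc.mpr hxy)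
  rw [Real.norm_eq_abs, Real.norm_eq_abs] at hmvt
  have hxpow : (0:ℝ) ≤ y ^ (α - 1) := Real.rpow_nonneg hy _
  have hxx : (0:ℝ) ≤ x ^ (α - 1) := Real.rpow_nonneg hx _
  have habs : |x - y| = x - y := abs_of_nonneg (by linarith)
  calc |x ^ α - y ^ α| ≤ α * x ^ (α - 1) * |x - y| := hmvt
    _ ≤ α * |x - y| * (x ^ (α - 1) + y ^ (α - 1)) := by
        rw [habs]; nlinarith [mul_nonneg (mul_nonneg (by linarith : (0:ℝ) ≤ α) (by linarith : (0:ℝ) ≤ x - y)) hxpow]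

/-- for real `α ≥ 1` and symmetric matrices `M₁, M₂`,
`|‖M₁‖_{S_α}^α − ‖M₂‖_{S_α}^α| ≤ α‖M₁−M₂‖_op(‖M₁‖_{S_{α−1}}^{α−1} + ‖M₂‖_{S_{α−1}}^{α−1})`,
where `‖M‖_{S_β}^β = Σ_j |λ_j(M)|^β`. -/
theorem schatten_pow_diff_le {N : ℕ} (M₁ M₂ : Matrix (Fin N) (Fin N) ℝ)
    (h₁ : M₁.IsHermitian) (h₂ : M₂.IsHermitian) (α : ℝ) (hα : 1 ≤ α) :
    |(∑ j, |h₁.eigenvalues j| ^ α) - ∑ j, |h₂.eigenvalues j| ^ α| ≤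
      α * opNorm (M₁ - M₂) *
        ((∑ j, |h₁.eigenvalues j| ^ (α - 1)) + ∑ j, |h₂.eigenvalues j| ^ (α - 1)) := by
  classical
  set σ₁ := Tuple.sort h₁.eigenvalues
  set σ₂ := Tuple.sort h₂.eigenvalues
  set ε := opNorm (M₁ - M₂) with hε
  have hε0 : 0 ≤ ε := norm_nonneg _
  -- rewrite sums via sorting permutations
  have e1 : ∀ (f : ℝ → ℝ), (∑ j, f (h₁.eigenvalues j)) = ∑ j, f (h₁.eigenvalues (σ₁ j)) :=
    fun f => (Equiv.sum_comp σ₁ (fun j => f (h₁.eigenvalues j))).symm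
  have e2 : ∀ (f : ℝ → ℝ), (∑ j, f (h₂.eigenvalues j)) = ∑ j, f (h₂.eigenvalues (σ₂ j)) :=
    fun f => (Equiv.sum_comp σ₂ (fun j => f (h₂.eigenvalues j))).symm
  rw [e1 (fun t => |t| ^ α), e2 (fun t => |t| ^ α),
      e1 (fun t => |t| ^ (α - 1)), e2 (fun t => |t| ^ (α - 1))]
  rw [← Finset.sum_sub_distrib]
  calc |∑ j, (|h₁.eigenvalues (σ₁ j)| ^ α - |h₂.eigenvalues (σ₂ j)| ^ α)|
      ≤ ∑ j, |(|h₁.eigenvalues (σ₁ j)| ^ α - |h₂.eigenvalues (σ₂ j)| ^ α)| :=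
        Finset.abs_sum_le_sum_abs _ _
    _ ≤ ∑ j, α * ε * (|h₁.eigenvalues (σ₁ j)| ^ (α - 1) + |h₂.eigenvalues (σ₂ j)| ^ (α - 1)) := by
        apply Finset.sum_le_sum
        intro j _
        set x := |h₁.eigenvalues (σ₁ j)|
        set y := |h₂.eigenvalues (σ₂ j)|
        have hkey := rpow_sub_rpow_le hα (abs_nonneg _ : (0:ℝ) ≤ x) (abs_nonneg _ : (0:ℝ) ≤ y)
        have hxy : |x - y| ≤ ε :=
          le_trans (abs_abs_sub_abs_le_abs_sub _ _) (weyl M₁ M₂ h₁ h₂ j)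
        have hpos : (0:ℝ) ≤ x ^ (α - 1) + y ^ (α - 1) := by
          have := Real.rpow_nonneg (abs_nonneg (h₁.eigenvalues (σ₁ j))) (α - 1)
          have := Real.rpow_nonneg (abs_nonneg (h₂.eigenvalues (σ₂ j))) (α - 1)
          positivity
        calc |x ^ α - y ^ α| ≤ α * |x - y| * (x ^ (α - 1) + y ^ (α - 1)) := hkey
          _ ≤ α * ε * (x ^ (α - 1) + y ^ (α - 1)) := by
              apply mul_le_mul_of_nonneg_right _ hpos
              exact mul_le_mul_of_nonneg_left hxy (by linarith)
    _ = α * ε * ((∑ j, |h₁.eigenvalues (σ₁ j)| ^ (α - 1)) + ∑ j, |h₂.eigenvalues (σ₂ j)| ^ (α - 1)) := by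
        rw [← Finset.mul_sum, Finset.sum_add_distrib]
end
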